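/- arXiv:2006.13673 — 4 statements merged into one kernel-verified Lean document; each statement's English description precedes it below -/
import Mathlib

section
/- Let S1, S2 ∈ Σ^n \ H_{n,k} with Ham(S1,S2) ≤ k, and let S' be the string of length n over the extended alphabet Σ ⊔ {$_1,…,$_n} (where $_1,…,$_n are pairwise distinct symbols not in Σ) defined by S'[i] = S1[i] if S1[i] = S2[i] and S'[i] = $_i otherwise. Then P(S') ⊆ P(S1), τ_{S',i} ≤ τ_{S1,i} for every i ∈ P(S') (so f_c(S') is well-defined), and f_c(S') ⊆ (f_c(S1) ∩ f_c(S2)) ∪ MP(S1,S2), where MP(S1,S2) = {i ∈ [1..n] : S1[i] ≠ S2[i]}. -/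
open Finset
open scoped Classical

noncomputable section

variable {α : Type*}

/-- `i ↻ n`: 1-indexed wrap-around of an (integer) position. -/
def zwrap (n : ℕ) (i : ℤ) : ℕ := ((i - 1) % (n : ℤ)).toNat + 1

/-- `S*[i]`: the infinite cyclic extension of the length-`n` string `S` (1-indexed). -/
def cext (n : ℕ) (S : ℕ → α) (i : ℕ) : α := S ((i - 1) % n + 1)

/-- The fragment `S*[a..]`, i.e. the string `w` with `w[j] = S*[a+j-1]`. -/
def frag (n : ℕ) (S : ℕ → α) (a : ℕ) : ℕ → α := fun j => cext n S (a + j - 1)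

/-- Hamming distance restricted to positions `[a..b]` (1-indexed strings). -/
def hamIcc (a b : ℕ) (S T : ℕ → α) : ℕ := ((Finset.Icc a b).filter fun j => S j ≠ T j).card

/-- Hamming distance between two length-`n` strings. -/
def ham (n : ℕ) (S T : ℕ → α) : ℕ := hamIcc 1 n S T

/-- `p` is a period of the length-`L` string `w` (1-indexed). -/
def IsPeriod (L : ℕ) (w : ℕ → α) (p : ℕ) : Prop :=
  1 ≤ p ∧ ∀ j, 1 ≤ j → j + p ≤ L → w j = w (j + p)

/-- `per(w)`: the shortest period of the length-`L` string `w`. -/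
def per (L : ℕ) (w : ℕ → α) : ℕ := sInf {p | IsPeriod L w p}

/-- `root(S)`: the length of the primitive root of the length-`n` string `S`,
i.e. the least length of a string `Q` with `S = Q^α`. -/
def root (n : ℕ) (S : ℕ → α) : ℕ := sInf {r | r ∣ n ∧ IsPeriod n S r}

/-- `S` is `(a,b)`-pseudo-periodic: it has an `(a,b)`-base. -/
def PseudoPeriodic (n : ℕ) (a b : ℝ) (S : ℕ → α) : Prop :=
  ∃ S' : ℕ → α, (root n S' : ℝ) ≤ (n : ℝ) / a ∧ (ham n S S' : ℝ) ≤ b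

/-- `cyc(S)`: left cyclic rotation, `cyc(S)[i] = S*[i+1]`. -/
def cyc (n : ℕ) (S : ℕ → α) : ℕ → α := fun i => cext n S (i + 1)

/-- `cyc^m(S)` for an integer `m`: `cyc^m(S)[i] = S*[i+m]` (cyclically). -/
def cycZ (n : ℕ) (m : ℤ) (S : ℕ → α) : ℕ → α := fun i => S (zwrap n ((i : ℤ) + m))

/-- `rot_n(P) = {(i-1) ↻ n : i ∈ P}`. -/
def rotSet (n : ℕ) (P : Finset ℕ) : Finset ℕ := P.image fun i => zwrap n ((i : ℤ) - 1)

/-- `ρ_{S,i} = per(S*[i..i+3ℓ-1])`. -/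
def rho (n ℓ : ℕ) (S : ℕ → α) (i : ℕ) : ℕ := per (3 * ℓ) (frag n S i)

/-- `μ_{S,i}*`: the infinite periodic extension of `μ_{S,i} = S*[i..i+ρ_{S,i}-1]` (1-indexed). -/
def muExt (n ℓ : ℕ) (S : ℕ → α) (i : ℕ) : ℕ → α :=
  fun j => cext n S (i + (j - 1) % rho n ℓ S i)

/-- `P(S)`: the set of cubic positions of `S`. -/
def cubicSet (n ℓ : ℕ) (S : ℕ → α) : Finset ℕ :=
  (Finset.Icc 1 n).filter fun i => rho n ℓ S i ≤ ℓ

/-- The defining set of `τ_{S,i}`: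
`{τ ≥ 1 : τ < (n/(γk))·Ham(S*[i..i+τ-1], μ_{S,i}*[1..τ])}`. -/
def tauSet (n ℓ k : ℕ) (γ : ℝ) (S : ℕ → α) (i : ℕ) : Set ℕ :=
  {τ | 1 ≤ τ ∧ (τ : ℝ) < (n : ℝ) / (γ * k) * (hamIcc 1 τ (frag n S i) (muExt n ℓ S i) : ℝ)}

/-- `τ_{S,i}`. -/
def tau (n ℓ k : ℕ) (γ : ℝ) (S : ℕ → α) (i : ℕ) : ℕ := sInf (tauSet n ℓ k γ S i)

/-- `R_{S,i} = [i..i+τ_{S,i}-1]`. -/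
def Rset (n ℓ k : ℕ) (γ : ℝ) (S : ℕ → α) (i : ℕ) : Finset ℕ :=
  Finset.Icc i (i + tau n ℓ k γ S i - 1)

/-- `M_{S,i} = {j ∈ R_{S,i} : S*[j] ≠ μ_{S,i}*[j-i+1]}`. -/
def Mset (n ℓ k : ℕ) (γ : ℝ) (S : ℕ → α) (i : ℕ) : Finset ℕ :=
  (Rset n ℓ k γ S i).filter fun j => cext n S j ≠ muExt n ℓ S i (j - i + 1)

/-- `A_{S,i} = {j ∈ R_{S,i} : [j..j+2ℓ-1] ⊆ R_{S,i} \ M_{S,i}}`. -/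
def Aset (n ℓ k : ℕ) (γ : ℝ) (S : ℕ → α) (i : ℕ) : Finset ℕ :=
  (Rset n ℓ k γ S i).filter fun j =>
    Finset.Icc j (j + 2 * ℓ - 1) ⊆ Rset n ℓ k γ S i \ Mset n ℓ k γ S i

/-- `f_c(S) = ∪_{i ∈ P(S)} {j ↻ n : j ∈ M_{S,i}}`. -/
def fc (n ℓ k : ℕ) (γ : ℝ) (S : ℕ → α) : Finset ℕ :=
  (cubicSet n ℓ S).biUnion fun i => (Mset n ℓ k γ S i).image fun j => zwrap n (j : ℤ)

section Helpers
variable {α : Type*}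

lemma isPeriod_refl (L : ℕ) (w : ℕ → α) (hL : 1 ≤ L) : IsPeriod L w L :=
  ⟨hL, fun j hj hjL => by omega⟩

lemma per_isPeriod (L : ℕ) (w : ℕ → α) (hL : 1 ≤ L) : IsPeriod L w (per L w) :=
  Nat.sInf_mem (⟨L, isPeriod_refl L w hL⟩ : Set.Nonempty {p | IsPeriod L w p})

lemma per_le {L p : ℕ} {w : ℕ → α} (hp : IsPeriod L w p) : per L w ≤ p :=
  Nat.sInf_le hp

lemma one_le_per (L : ℕ) (w : ℕ → α) (hL : 1 ≤ L) : 1 ≤ per L w :=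
  (per_isPeriod L w hL).1

lemma cext_add_n {n : ℕ} (S : ℕ → α) {m : ℕ} (hm : 1 ≤ m) :
    cext n S (m + n) = cext n S m := by
  unfold cext
  congr 1
  have : m + n - 1 = (m - 1) + n := by omega
  rw [this, Nat.add_mod_right]

lemma muExt_add_rho {n ℓ : ℕ} (S : ℕ → α) (i : ℕ) {j : ℕ} (hj : 1 ≤ j) :
    muExt n ℓ S i (j + rho n ℓ S i) = muExt n ℓ S i j := by
  unfold muExt
  congr 2
  have : j + rho n ℓ S i - 1 = (j - 1) + rho n ℓ S i := by omega
  rw [this, Nat.add_mod_right]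

lemma muExt_add_mul_rho {n ℓ : ℕ} (S : ℕ → α) (i : ℕ) (a : ℕ) {j : ℕ} (hj : 1 ≤ j) :
    muExt n ℓ S i (j + a * rho n ℓ S i) = muExt n ℓ S i j := by
  induction a with
  | zero => simp
  | succ a ih =>
      have : j + (a + 1) * rho n ℓ S i = (j + a * rho n ℓ S i) + rho n ℓ S i := by ring
      rw [this, muExt_add_rho S i (by omega), ih]

end Helpers

section LemW
variable {α : Type*}

lemma one_le_rho (n ℓ : ℕ) (S : ℕ → α) (i : ℕ) (hℓ1 : 1 ≤ ℓ) : 1 ≤ rho n ℓ S i :=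
  one_le_per _ _ (by omega)

lemma n_ge (n k ℓ : ℕ) (γ : ℝ) (hk1 : 1 ≤ k) (hγ : 14 ≤ γ) (hℓ1 : 1 ≤ ℓ)
    (hn : (n : ℝ) = 3 * γ * k * ℓ) : 42 * ℓ ≤ n := by
  have hk : (1:ℝ) ≤ (k:ℝ) := by exact_mod_cast hk1
  have hl : (1:ℝ) ≤ (ℓ:ℝ) := by exact_mod_cast hℓ1
  have : (42:ℝ) * ℓ ≤ (n:ℝ) := by
    rw [hn]
    have h1 : (42:ℝ) * ℓ ≤ 3 * γ * ℓ := by nlinarith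
    have h2 : 3 * γ * ℓ ≤ 3 * γ * (k:ℝ) * ℓ := by nlinarith
    linarith
  exact_mod_cast this

lemma tauSet_nonempty {n k ℓ : ℕ} {γ : ℝ} (hk1 : 1 ≤ k) (hγ : 14 ≤ γ) (hℓ1 : 1 ≤ ℓ)
    (hn : (n : ℝ) = 3 * γ * k * ℓ) (S : ℕ → α)
    (hS : ¬ PseudoPeriodic n (3 * γ * k) (γ * k) S)
    {i : ℕ} (hi : i ∈ cubicSet n ℓ S) :
    (tauSet n ℓ k γ S i).Nonempty := by
  by_contra hne
  rw [Set.not_nonempty_iff_eq_empty] at hne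
  have hγ0 : (0:ℝ) < γ := by linarith
  have hk0 : (0:ℝ) < (k:ℝ) := by exact_mod_cast hk1
  have hn42 : 42 * ℓ ≤ n := n_ge n k ℓ γ hk1 hγ hℓ1 hn
  have hn1 : 1 ≤ n := by omega
  simp only [cubicSet, Finset.mem_filter, Finset.mem_Icc] at hi
  obtain ⟨⟨hi1, hin⟩, hiρ⟩ := hi
  set ρ := rho n ℓ S i with hρdef
  have hρ1 : 1 ≤ ρ := one_le_rho n ℓ S i hℓ1
  set M := muExt n ℓ S i with hMdef
  have hMρ : ∀ (a : ℕ) {j : ℕ}, 1 ≤ j → M (j + a * ρ) = M j := by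
    intro a j hj; exact muExt_add_mul_rho S i a hj
  have hh : ∀ τ : ℕ, 1 ≤ τ → 3 * ℓ * hamIcc 1 τ (frag n S i) M ≤ τ := by
    intro τ hτ
    have hτn : τ ∉ tauSet n ℓ k γ S i := by rw [hne]; exact Set.notMem_empty τ
    have h2 : ¬ ((τ:ℝ) < (n : ℝ) / (γ * k) * (hamIcc 1 τ (frag n S i) M : ℝ)) :=
      fun hcon => hτn ⟨hτ, hcon⟩
    push_neg at h2
    have hc : (n : ℝ) / (γ * k) = 3 * ℓ := by
      rw [hn]; field_simp
    rw [hc] at h2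
    exact_mod_cast h2
  by_cases hA : ∀ j, 1 ≤ j → M (j + n) = M j
  · -- Case A : μ* has period n as well; build a base with period gcd(ρ,n)
    have hMn : ∀ (a : ℕ) {j : ℕ}, 1 ≤ j → M (j + a * n) = M j := by
      intro a
      induction a with
      | zero => intro j hj; simp
      | succ a ih =>
          intro j hj
          have e : j + (a + 1) * n = (j + a * n) + n := by ring
          rw [e, hA _ (by omega), ih hj]
    have hMmod : ∀ a b, 1 ≤ a → 1 ≤ b → a % n = b % n → M a = M b := by
      have key : ∀ a b, 1 ≤ a → a ≤ b → a % n = b % n → M a = M b := by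
        intro a b ha hab hmod
        obtain ⟨c, hc⟩ := (Nat.modEq_iff_dvd' hab).mp hmod
        rw [Nat.mul_comm] at hc
        have hb : b = a + c * n := by omega
        rw [hb, hMn c ha]
      intro a b ha hb hab
      rcases le_total a b with h' | h'
      · exact key a b ha h' hab
      · exact (key b a hb h' hab.symm).symm
    set g := Nat.gcd ρ n with hgdef
    have hg1 : 1 ≤ g := Nat.gcd_pos_of_pos_left n hρ1
    have hgρ : g ≤ ρ := Nat.le_of_dvd hρ1 (Nat.gcd_dvd_left ρ n)
    have hgn : g ∣ n := Nat.gcd_dvd_right ρ n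
    obtain ⟨a, b, hab⟩ : ∃ a b : ℕ, a * ρ = g + b * n := by
      have hb := Nat.gcd_eq_gcd_ab ρ n
      set x := Nat.gcdA ρ n with hx
      set y := Nat.gcdB ρ n with hy
      set t : ℤ := ((x.natAbs + y.natAbs + 1 : ℕ) : ℤ) with ht
      rw [← hgdef] at hb
      have ht0x : (x.natAbs : ℤ) < t := by
        rw [ht]; exact_mod_cast (by omega : x.natAbs < x.natAbs + y.natAbs + 1)
      have ht0y : (y.natAbs : ℤ) < t := by
        rw [ht]; exact_mod_cast (by omega : y.natAbs < x.natAbs + y.natAbs + 1)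
      have ht00 : (0:ℤ) ≤ t := by rw [ht]; exact_mod_cast Nat.zero_le _
      have hnZ : (1:ℤ) ≤ (n:ℤ) := by exact_mod_cast hn1
      have hρZ : (1:ℤ) ≤ (ρ:ℤ) := by exact_mod_cast hρ1
      have hx1 : -(x.natAbs : ℤ) ≤ x := by
        rw [← Int.abs_eq_natAbs]; exact neg_abs_le x
      have hy1 : y ≤ (y.natAbs : ℤ) := by
        rw [← Int.abs_eq_natAbs]; exact le_abs_self y
      have htn : t ≤ t * n := le_mul_of_one_le_right ht00 hnZ
      have htρ : t ≤ t * ρ := le_mul_of_one_le_right ht00 hρZ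
      have ha0 : (0:ℤ) ≤ x + t * n := by linarith
      have hb0 : (0:ℤ) ≤ t * ρ - y := by linarith
      refine ⟨(x + t * n).toNat, (t * ρ - y).toNat, ?_⟩
      have hZ : ((x + t * n).toNat : ℤ) * ρ = g + ((t * ρ - y).toNat : ℤ) * n := by
        rw [Int.toNat_of_nonneg ha0, Int.toNat_of_nonneg hb0]
        linear_combination -hb
      exact_mod_cast hZ
    have hMg : ∀ j, 1 ≤ j → M (j + g) = M j := by
      intro j hj
      have h1 : M (j + g + b * n) = M (j + g) := hMn b (by omega)
      have h2 : j + g + b * n = j + a * ρ := by rw [hab]; ring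
      rw [h2] at h1
      rw [← h1, hMρ a hj]
    apply hS
    refine ⟨fun m => M (m + n + 1 - i), ?_, ?_⟩
    · -- root bound
      have hBper : IsPeriod n (fun m => M (m + n + 1 - i)) g := by
        refine ⟨hg1, fun m hm hmn => ?_⟩
        show M (m + n + 1 - i) = M (m + g + n + 1 - i)
        have h2 : m + g + n + 1 - i = (m + n + 1 - i) + g := by omega
        rw [h2]
        exact (hMg _ (by omega)).symm
      have hroot : root n (fun m => M (m + n + 1 - i)) ≤ g :=
        Nat.sInf_le (show g ∈ {r | r ∣ n ∧ IsPeriod n (fun m => M (m + n + 1 - i)) r} from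
          ⟨hgn, hBper⟩)
      have h1 : (n:ℝ) / (3 * γ * k) = ℓ := by rw [hn]; field_simp
      rw [h1]
      have : root n (fun m => M (m + n + 1 - i)) ≤ ℓ := le_trans hroot (by omega)
      exact_mod_cast this
    · -- ham bound
      have hinj : ham n S (fun m => M (m + n + 1 - i)) ≤ hamIcc 1 n (frag n S i) M := by
        unfold ham hamIcc
        apply Finset.card_le_card_of_injOn (fun m => (m + n - i) % n + 1)
        · intro m hm
          simp only [Finset.mem_coe, Finset.mem_filter, Finset.mem_Icc] at hm ⊢
          obtain ⟨⟨hm1, hmn⟩, hmne⟩ := hm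
          have hrlt : (m + n - i) % n < n := Nat.mod_lt _ (by omega)
          refine ⟨⟨by omega, by omega⟩, ?_⟩
          have hfrag : frag n S i ((m + n - i) % n + 1) = S m := by
            show cext n S (i + ((m + n - i) % n + 1) - 1) = S m
            unfold cext
            congr 1
            have hmodeq : ((i - 1) + (m + n - i) % n) % n = (m - 1) % n := by
              have h1 : Nat.ModEq n ((m + n - i) % n) (m + n - i) := Nat.mod_modEq _ _
              have h2 : Nat.ModEq n ((i - 1) + (m + n - i) % n) ((i - 1) + (m + n - i)) :=
                Nat.ModEq.add_left _ h1
              have e2 : (i - 1) + (m + n - i) = (m - 1) + n := by omega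
              rw [e2] at h2
              have h3 : Nat.ModEq n ((m - 1) + n) (m - 1) := by
                simpa using (Nat.add_modEq_right (n := n) (a := m - 1))
              exact h2.trans h3
            have e1 : i + ((m + n - i) % n + 1) - 1 - 1 = (i - 1) + (m + n - i) % n := by omega
            rw [e1, hmodeq, Nat.mod_eq_of_lt (by omega)]
            omega
          have hMB : M ((m + n - i) % n + 1) = M (m + n + 1 - i) := by
            apply hMmod _ _ (by omega) (by omega)
            have h1 : Nat.ModEq n ((m + n - i) % n + 1) ((m + n - i) + 1) :=
              Nat.ModEq.add_right _ (Nat.mod_modEq _ _)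
            have e1 : (m + n - i) + 1 = m + n + 1 - i := by omega
            rw [e1] at h1
            exact h1
          rw [hfrag, hMB]
          exact hmne
        · intro m1 h1 m2 h2 heq
          simp only [Finset.coe_filter, Set.mem_setOf_eq, Finset.mem_Icc] at h1 h2
          have hmod : Nat.ModEq n (m1 + n - i) (m2 + n - i) := by
            simpa [Nat.ModEq] using Nat.succ_injective heq
          rcases le_total m1 m2 with h' | h'
          · obtain ⟨c, hc⟩ := (Nat.modEq_iff_dvd' (by omega)).mp hmod
            rcases c with _ | c
            · omega
            · rw [Nat.mul_succ] at hc; omega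
          · obtain ⟨c, hc⟩ := (Nat.modEq_iff_dvd' (by omega)).mp hmod.symm
            rcases c with _ | c
            · omega
            · rw [Nat.mul_succ] at hc; omega
      have h2 := hh n (by omega)
      have hl0 : (0:ℝ) < (ℓ:ℝ) := by exact_mod_cast hℓ1
      have hcast : (3:ℝ) * ℓ * (hamIcc 1 n (frag n S i) M : ℝ) ≤ (n:ℝ) := by exact_mod_cast h2
      have hcast2 : (ham n S (fun m => M (m + n + 1 - i)) : ℝ) ≤
          (hamIcc 1 n (frag n S i) M : ℝ) := by exact_mod_cast hinj
      rw [hn] at hcast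
      nlinarith
  · -- Case B : μ* does not have period n; mismatches accumulate
    push_neg at hA
    obtain ⟨j, hj1, hjne⟩ := hA
    set c := (j - 1) / ρ with hc
    set r := (j - 1) % ρ with hr
    have hdm : ρ * c + r = j - 1 := Nat.div_add_mod (j - 1) ρ
    have hrρ : r < ρ := Nat.mod_lt _ (by omega)
    have hcomm : ρ * c = c * ρ := Nat.mul_comm _ _
    set j0 := r + 1 with hj0def
    have hj01 : 1 ≤ j0 := by omega
    have hj0ρ : j0 ≤ ρ := by omega
    have hsplit : j = j0 + c * ρ := by omega
    have hj0 : M (j0 + n) ≠ M j0 := by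
      intro h
      apply hjne
      calc M (j + n) = M (j0 + n) := by
            rw [show j + n = (j0 + n) + c * ρ by omega]
            exact hMρ c (by omega)
        _ = M j0 := h
        _ = M j := by
            rw [hsplit]
            exact (hMρ c hj01).symm
    have hstep : ∀ t : ℕ, M (j0 + t * ρ + n) ≠ M (j0 + t * ρ) := by
      intro t
      have e1 : M (j0 + t * ρ) = M j0 := hMρ t hj01
      have e2 : M (j0 + t * ρ + n) = M (j0 + n) := by
        have h := hMρ t (j := j0 + n) (by omega)
        rw [show j0 + n + t * ρ = j0 + t * ρ + n by ring] at h
        exact h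
      rw [e1, e2]
      exact hj0
    set T := 2 * ℓ + 2 * n + 1 with hT
    set L := j0 + T * ρ + n with hLdef
    set P : ℕ → ℕ := fun t => if frag n S i (j0 + t * ρ) ≠ M (j0 + t * ρ)
      then j0 + t * ρ else j0 + t * ρ + n with hPdef
    set F := (Finset.Icc 1 L).filter (fun j => frag n S i j ≠ M j) with hFdef
    have hPmem : ∀ t ∈ Finset.range T, P t ∈ F := by
      intro t ht
      rw [Finset.mem_range] at ht
      have hb1 : j0 + t * ρ + n ≤ L := by
        have h1 : (t + 1) * ρ ≤ T * ρ := Nat.mul_le_mul_right ρ (by omega)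
        have h2 : (t + 1) * ρ = t * ρ + ρ := by ring
        omega
      simp only [hFdef, Finset.mem_filter, Finset.mem_Icc, hPdef]
      by_cases hcc : frag n S i (j0 + t * ρ) ≠ M (j0 + t * ρ)
      · rw [if_pos hcc]; exact ⟨⟨by omega, by omega⟩, hcc⟩
      · rw [if_neg hcc]
        push_neg at hcc
        refine ⟨⟨by omega, hb1⟩, ?_⟩
        have hfr : frag n S i (j0 + t * ρ + n) = frag n S i (j0 + t * ρ) := by
          show cext n S (i + (j0 + t * ρ + n) - 1) = cext n S (i + (j0 + t * ρ) - 1)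
          rw [show i + (j0 + t * ρ + n) - 1 = (i + (j0 + t * ρ) - 1) + n by omega,
            cext_add_n S (by omega)]
        rw [hfr, hcc]
        exact (hstep t).symm
    have hcard : T ≤ 2 * F.card := by
      have h1 : (Finset.range T).card ≤ 2 * ((Finset.range T).image P).card := by
        apply Finset.card_le_mul_card_image
        intro a ha
        have hsub : (Finset.range T).filter (fun t => P t = a) ⊆
            {(a - j0) / ρ, (a - j0 - n) / ρ} := by
          intro t ht
          rw [Finset.mem_filter] at ht
          obtain ⟨-, hPt⟩ := ht
          simp only [hPdef] at hPt
          simp only [Finset.mem_insert, Finset.mem_singleton]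
          split_ifs at hPt with hcc
          · left
            rw [← hPt]
            have e : j0 + t * ρ - j0 = t * ρ := by omega
            rw [e, Nat.mul_div_cancel t (by omega)]
          · right
            rw [← hPt]
            have e : j0 + t * ρ + n - j0 - n = t * ρ := by omega
            rw [e, Nat.mul_div_cancel t (by omega)]
        exact le_trans (Finset.card_le_card hsub)
          (le_trans (Finset.card_insert_le _ _) (by simp))
      have h2 : ((Finset.range T).image P).card ≤ F.card := by
        apply Finset.card_le_card
        intro a ha
        rw [Finset.mem_image] at ha
        obtain ⟨t, ht, rfl⟩ := ha
        exact hPmem t ht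
      have h3 : (Finset.range T).card = T := Finset.card_range T
      omega
    have hhL := hh L (by omega)
    have hFham : hamIcc 1 L (frag n S i) M = F.card := rfl
    rw [hFham] at hhL
    have m1 : ℓ * T ≤ 2 * (ℓ * F.card) :=
      calc ℓ * T ≤ ℓ * (2 * F.card) := Nat.mul_le_mul_left ℓ hcard
        _ = 2 * (ℓ * F.card) := by ring
    have m2 : 3 * (ℓ * F.card) ≤ ℓ + ℓ * T + n := by
      have e : 3 * (ℓ * F.card) = 3 * ℓ * F.card := by ring
      have hTρ : T * ρ ≤ ℓ * T :=
        le_trans (Nat.mul_le_mul_left T hiρ) (le_of_eq (Nat.mul_comm T ℓ))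
      omega
    have m3 : T ≤ ℓ * T := Nat.le_mul_of_pos_left T (by omega)
    omega

end LemW

section Main
variable {α : Type*}

lemma hamIcc_mono {α β : Type*} (a b : ℕ) (f g : ℕ → α) (f' g' : ℕ → β)
    (h : ∀ j, a ≤ j → j ≤ b → f j ≠ g j → f' j ≠ g' j) :
    hamIcc a b f g ≤ hamIcc a b f' g' := by
  unfold hamIcc
  apply Finset.card_le_card
  intro x hx
  rw [Finset.mem_filter, Finset.mem_Icc] at hx ⊢
  exact ⟨hx.1, h x hx.1.1 hx.1.2 hx.2⟩

lemma cextS'_cases {n : ℕ} {S1 S2 : ℕ → α} {S' : ℕ → α ⊕ ℕ}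
    (hS' : S' = fun i => if S1 i = S2 i then (Sum.inl (S1 i) : α ⊕ ℕ) else Sum.inr i)
    (m : ℕ) :
    (S1 ((m - 1) % n + 1) = S2 ((m - 1) % n + 1) ∧
      cext n S' m = Sum.inl (S1 ((m - 1) % n + 1))) ∨
    (S1 ((m - 1) % n + 1) ≠ S2 ((m - 1) % n + 1) ∧
      cext n S' m = Sum.inr ((m - 1) % n + 1)) := by
  unfold cext
  rw [hS']
  by_cases h : S1 ((m - 1) % n + 1) = S2 ((m - 1) % n + 1)
  · exact Or.inl ⟨h, by simp [h]⟩
  · exact Or.inr ⟨h, by simp [h]⟩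

lemma window_match {n ℓ : ℕ} {S1 S2 : ℕ → α} {S' : ℕ → α ⊕ ℕ}
    (hn42 : 42 * ℓ ≤ n) (hℓ1 : 1 ≤ ℓ)
    (hS' : S' = fun i => if S1 i = S2 i then (Sum.inl (S1 i) : α ⊕ ℕ) else Sum.inr i)
    {i : ℕ} (hi : i ∈ cubicSet n ℓ S') :
    ∀ m, i ≤ m → m + 1 ≤ i + 3 * ℓ →
      S1 ((m - 1) % n + 1) = S2 ((m - 1) % n + 1) := by
  simp only [cubicSet, Finset.mem_filter, Finset.mem_Icc] at hi
  obtain ⟨⟨hi1, hin⟩, hpℓ⟩ := hi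
  have hn1 : 1 ≤ n := by omega
  have hp : IsPeriod (3 * ℓ) (frag n S' i) (rho n ℓ S' i) := per_isPeriod _ _ (by omega)
  set p := rho n ℓ S' i with hpdef
  have hp1 : 1 ≤ p := hp.1
  intro m him hm3
  by_contra hne
  obtain (⟨h, _⟩ | ⟨_, hinr⟩) := cextS'_cases hS' (n := n) m
  · exact hne h
  set j := m - i + 1 with hjdef
  have hj1 : 1 ≤ j := by omega
  have hj3 : j ≤ 3 * ℓ := by omega
  have hfm : frag n S' i j = cext n S' m := by
    show cext n S' (i + j - 1) = cext n S' m
    congr 1; omega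
  rcases le_or_gt (j + p) (3 * ℓ) with hcase | hcase
  · have hper := hp.2 j hj1 hcase
    have hfm2 : frag n S' i (j + p) = cext n S' (m + p) := by
      show cext n S' (i + (j + p) - 1) = cext n S' (m + p)
      congr 1; omega
    have hthis : cext n S' (m + p) = Sum.inr ((m - 1) % n + 1) := by
      rw [← hfm2, ← hper, hfm, hinr]
    obtain (⟨_, h2⟩ | ⟨_, h2⟩) := cextS'_cases hS' (n := n) (m + p)
    · rw [h2] at hthis; exact absurd hthis (by simp)
    · rw [h2] at hthis
      have hww : (m + p - 1) % n = (m - 1) % n := by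
        have := Sum.inr.inj hthis; omega
      have h3 : Nat.ModEq n (m - 1) ((m - 1) + p) := by
        show (m - 1) % n = ((m - 1) + p) % n
        rw [show (m - 1) + p = m + p - 1 by omega, hww]
      have hdvd : n ∣ p := by
        have h4 := (Nat.modEq_iff_dvd' (by omega)).mp h3
        rwa [show (m - 1) + p - (m - 1) = p by omega] at h4
      have := Nat.le_of_dvd (by omega) hdvd
      omega
  · have hjp : p + 1 ≤ j := by omega
    have hper := hp.2 (j - p) (by omega) (by omega)
    rw [show j - p + p = j by omega] at hper
    have hfm2 : frag n S' i (j - p) = cext n S' (m - p) := by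
      show cext n S' (i + (j - p) - 1) = cext n S' (m - p)
      congr 1; omega
    have hthis : cext n S' (m - p) = Sum.inr ((m - 1) % n + 1) := by
      rw [← hfm2, hper, hfm, hinr]
    obtain (⟨_, h2⟩ | ⟨_, h2⟩) := cextS'_cases hS' (n := n) (m - p)
    · rw [h2] at hthis; exact absurd hthis (by simp)
    · rw [h2] at hthis
      have hww : (m - p - 1) % n = (m - 1) % n := by
        have := Sum.inr.inj hthis; omega
      have h3 : Nat.ModEq n (m - p - 1) ((m - p - 1) + p) := by
        show (m - p - 1) % n = ((m - p - 1) + p) % n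
        rw [show (m - p - 1) + p = m - 1 by omega, hww]
      have hdvd : n ∣ p := by
        have h4 := (Nat.modEq_iff_dvd' (by omega)).mp h3
        rwa [show (m - p - 1) + p - (m - p - 1) = p by omega] at h4
      have := Nat.le_of_dvd (by omega) hdvd
      omega

lemma frag_inl {n ℓ : ℕ} {S1 S2 : ℕ → α} {S' : ℕ → α ⊕ ℕ}
    (hn42 : 42 * ℓ ≤ n) (hℓ1 : 1 ≤ ℓ)
    (hS' : S' = fun i => if S1 i = S2 i then (Sum.inl (S1 i) : α ⊕ ℕ) else Sum.inr i)
    {i : ℕ} (hi : i ∈ cubicSet n ℓ S') :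
    ∀ j, 1 ≤ j → j ≤ 3 * ℓ → frag n S' i j = Sum.inl (frag n S1 i j) := by
  intro j h1 h3
  have hi1 : 1 ≤ i := by
    simp only [cubicSet, Finset.mem_filter, Finset.mem_Icc] at hi; omega
  have hw := window_match hn42 hℓ1 hS' hi (i + j - 1) (by omega) (by omega)
  obtain (⟨heq, hinl⟩ | ⟨hne, _⟩) := cextS'_cases hS' (n := n) (i + j - 1)
  · exact hinl
  · exact absurd hw hne

lemma rho_eq {n ℓ : ℕ} {S1 S2 : ℕ → α} {S' : ℕ → α ⊕ ℕ}
    (hn42 : 42 * ℓ ≤ n) (hℓ1 : 1 ≤ ℓ)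
    (hS' : S' = fun i => if S1 i = S2 i then (Sum.inl (S1 i) : α ⊕ ℕ) else Sum.inr i)
    {i : ℕ} (hi : i ∈ cubicSet n ℓ S') :
    rho n ℓ S' i = rho n ℓ S1 i := by
  have hF := frag_inl hn42 hℓ1 hS' hi
  apply le_antisymm
  · -- per S' ≤ per S1
    have hq : IsPeriod (3 * ℓ) (frag n S1 i) (rho n ℓ S1 i) := per_isPeriod _ _ (by omega)
    have : IsPeriod (3 * ℓ) (frag n S' i) (rho n ℓ S1 i) := by
      refine ⟨hq.1, fun j hj hjq => ?_⟩
      rw [hF j hj (by omega), hF (j + rho n ℓ S1 i) (by omega) (by omega), hq.2 j hj hjq]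
    exact per_le this
  · have hp : IsPeriod (3 * ℓ) (frag n S' i) (rho n ℓ S' i) := per_isPeriod _ _ (by omega)
    have : IsPeriod (3 * ℓ) (frag n S1 i) (rho n ℓ S' i) := by
      refine ⟨hp.1, fun j hj hjq => ?_⟩
      have h := hp.2 j hj hjq
      rw [hF j hj (by omega), hF (j + rho n ℓ S' i) (by omega) (by omega)] at h
      exact Sum.inl.inj h
    exact per_le this

lemma muExt_inl {n ℓ : ℕ} {S1 S2 : ℕ → α} {S' : ℕ → α ⊕ ℕ}
    (hn42 : 42 * ℓ ≤ n) (hℓ1 : 1 ≤ ℓ)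
    (hS' : S' = fun i => if S1 i = S2 i then (Sum.inl (S1 i) : α ⊕ ℕ) else Sum.inr i)
    {i : ℕ} (hi : i ∈ cubicSet n ℓ S') :
    ∀ j, muExt n ℓ S' i j = Sum.inl (muExt n ℓ S1 i j) := by
  intro j
  have hiρ : rho n ℓ S' i ≤ ℓ := by
    simp only [cubicSet, Finset.mem_filter, Finset.mem_Icc] at hi; exact hi.2
  have hi1 : 1 ≤ i := by
    simp only [cubicSet, Finset.mem_filter, Finset.mem_Icc] at hi; omega
  have hρ1 : 1 ≤ rho n ℓ S' i := one_le_rho n ℓ S' i hℓ1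
  have hρeq := rho_eq hn42 hℓ1 hS' hi
  show cext n S' (i + (j - 1) % rho n ℓ S' i) =
    Sum.inl (cext n S1 (i + (j - 1) % rho n ℓ S1 i))
  rw [← hρeq]
  set m := i + (j - 1) % rho n ℓ S' i with hm
  have hmlt : (j - 1) % rho n ℓ S' i < rho n ℓ S' i := Nat.mod_lt _ (by omega)
  have hw := window_match hn42 hℓ1 hS' hi m (by omega) (by omega)
  obtain (⟨heq, hinl⟩ | ⟨hne, _⟩) := cextS'_cases hS' (n := n) m
  · exact hinl
  · exact absurd hw hne

lemma mismatch_mono {n ℓ : ℕ} {S1 S2 : ℕ → α} {S' : ℕ → α ⊕ ℕ}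
    (hn42 : 42 * ℓ ≤ n) (hℓ1 : 1 ≤ ℓ)
    (hS' : S' = fun i => if S1 i = S2 i then (Sum.inl (S1 i) : α ⊕ ℕ) else Sum.inr i)
    {i : ℕ} (hi : i ∈ cubicSet n ℓ S') :
    ∀ j, frag n S1 i j ≠ muExt n ℓ S1 i j → frag n S' i j ≠ muExt n ℓ S' i j := by
  intro j hne hcon
  rw [muExt_inl hn42 hℓ1 hS' hi j] at hcon
  obtain (⟨heq, hinl⟩ | ⟨_, hinr⟩) := cextS'_cases hS' (n := n) (i + j - 1)
  · have : frag n S' i j = Sum.inl (frag n S1 i j) := hinl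
    rw [this] at hcon
    exact hne (Sum.inl.inj hcon)
  · have : frag n S' i j = Sum.inr ((i + j - 1 - 1) % n + 1) := hinr
    rw [this] at hcon
    exact absurd hcon (by simp)

lemma ham_mono {n ℓ : ℕ} {S1 S2 : ℕ → α} {S' : ℕ → α ⊕ ℕ}
    (hn42 : 42 * ℓ ≤ n) (hℓ1 : 1 ≤ ℓ)
    (hS' : S' = fun i => if S1 i = S2 i then (Sum.inl (S1 i) : α ⊕ ℕ) else Sum.inr i)
    {i : ℕ} (hi : i ∈ cubicSet n ℓ S') (τ : ℕ) :
    hamIcc 1 τ (frag n S1 i) (muExt n ℓ S1 i) ≤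
      hamIcc 1 τ (frag n S' i) (muExt n ℓ S' i) := by
  exact hamIcc_mono 1 τ _ _ _ _ fun j _ _ hne => mismatch_mono hn42 hℓ1 hS' hi j hne

lemma hS'_symm {S1 S2 : ℕ → α} {S' : ℕ → α ⊕ ℕ}
    (hS' : S' = fun i => if S1 i = S2 i then (Sum.inl (S1 i) : α ⊕ ℕ) else Sum.inr i) :
    S' = fun i => if S2 i = S1 i then (Sum.inl (S2 i) : α ⊕ ℕ) else Sum.inr i := by
  funext m
  simp only [hS']
  by_cases h : S1 m = S2 m
  · rw [if_pos h, if_pos h.symm, h]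
  · rw [if_neg h, if_neg (fun hh : S2 m = S1 m => h hh.symm)]

end Main

lemma mem_coeM_iff {s : Finset ℕ} {j : ℤ} :
    j ∈ (do let a ← s; pure ((a : ℕ) : ℤ) : Finset ℤ) ↔ ∃ m ∈ s, (m : ℤ) = j := by
  simp only [Bind.bind] at *
  rw [@Finset.mem_sup ℤ ℕ (fun a b => Classical.propDecidable (a = b)) s
    (fun a => pure ((a:ℕ):ℤ)) j]
  constructor
  · rintro ⟨m, hm, hj⟩
    simp only [Pure.pure, Finset.mem_singleton] at hj
    exact ⟨m, hm, hj.symm⟩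
  · rintro ⟨m, hm, rfl⟩
    simp only [Pure.pure, Finset.mem_singleton]
    exact ⟨m, hm, rfl⟩

lemma zwrap_natCast (n j : ℕ) (hj : 1 ≤ j) : zwrap n (j : ℤ) = (j - 1) % n + 1 := by
  unfold zwrap
  have e : (j : ℤ) - 1 = ((j - 1 : ℕ) : ℤ) := by omega
  rw [e, ← Int.natCast_mod, Int.toNat_natCast]

/-- Let `S1, S2 ∈ Σ^n \ H_{n,k}` with `Ham(S1,S2) ≤ k`, and let `S'` (over
`Σ ⊔ {$_1,…,$_n}`) agree with `S1` where `S1 = S2` and carry a fresh symbol `$_i`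
elsewhere. Then `P(S') ⊆ P(S1)`, `τ_{S',i} ≤ τ_{S1,i}` for `i ∈ P(S')`, and
`f_c(S') ⊆ (f_c(S1) ∩ f_c(S2)) ∪ MP(S1,S2)`. -/
theorem stmt14 {α : Type*} (n k ℓ : ℕ) (γ : ℝ)
    (hk1 : 1 ≤ k) (hkn : k ≤ n) (hγ : 14 ≤ γ) (hℓ1 : 1 ≤ ℓ)
    (hn : (n : ℝ) = 3 * γ * k * ℓ)
    (S1 S2 : ℕ → α)
    (hS1 : ¬ PseudoPeriodic n (3 * γ * k) (γ * k) S1)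
    (hS2 : ¬ PseudoPeriodic n (3 * γ * k) (γ * k) S2)
    (hham : ham n S1 S2 ≤ k)
    (S' : ℕ → α ⊕ ℕ)
    (hS' : S' = fun i => if S1 i = S2 i then (Sum.inl (S1 i) : α ⊕ ℕ) else Sum.inr i) :
    cubicSet n ℓ S' ⊆ cubicSet n ℓ S1 ∧
      (∀ i ∈ cubicSet n ℓ S', tau n ℓ k γ S' i ≤ tau n ℓ k γ S1 i) ∧
      fc n ℓ k γ S' ⊆ (fc n ℓ k γ S1 ∩ fc n ℓ k γ S2) ∪
        ((Finset.Icc 1 n).filter fun i => S1 i ≠ S2 i) := by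
  have hn42 : 42 * ℓ ≤ n := n_ge n k ℓ γ hk1 hγ hℓ1 hn
  have hn1 : 1 ≤ n := by omega
  have hγ0 : (0:ℝ) < γ := by linarith
  have hk0 : (0:ℝ) < (k:ℝ) := by exact_mod_cast hk1
  have hsym := hS'_symm hS'
  have hcub1 : ∀ i ∈ cubicSet n ℓ S', i ∈ cubicSet n ℓ S1 := by
    intro i hi
    have hρ := rho_eq hn42 hℓ1 hS' hi
    simp only [cubicSet, Finset.mem_filter, Finset.mem_Icc] at hi ⊢
    exact ⟨hi.1, by rw [← hρ]; exact hi.2⟩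
  have hcub2 : ∀ i ∈ cubicSet n ℓ S', i ∈ cubicSet n ℓ S2 := by
    intro i hi
    have hρ := rho_eq hn42 hℓ1 hsym hi
    simp only [cubicSet, Finset.mem_filter, Finset.mem_Icc] at hi ⊢
    exact ⟨hi.1, by rw [← hρ]; exact hi.2⟩
  have htau1 : ∀ i ∈ cubicSet n ℓ S', tau n ℓ k γ S' i ≤ tau n ℓ k γ S1 i := by
    intro i hi
    have hsub : tauSet n ℓ k γ S1 i ⊆ tauSet n ℓ k γ S' i := by
      intro τ hτ
      obtain ⟨h1, h2⟩ := hτ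
      refine ⟨h1, lt_of_lt_of_le h2 ?_⟩
      have hmono := ham_mono hn42 hℓ1 hS' hi τ
      have hc0 : (0:ℝ) ≤ (n:ℝ) / (γ * k) := by positivity
      exact mul_le_mul_of_nonneg_left (by exact_mod_cast hmono) hc0
    have hne := tauSet_nonempty hk1 hγ hℓ1 hn S1 hS1 (hcub1 i hi)
    exact Nat.sInf_le (hsub (Nat.sInf_mem hne))
  have htau2 : ∀ i ∈ cubicSet n ℓ S', tau n ℓ k γ S' i ≤ tau n ℓ k γ S2 i := by
    intro i hi
    have hsub : tauSet n ℓ k γ S2 i ⊆ tauSet n ℓ k γ S' i := by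
      intro τ hτ
      obtain ⟨h1, h2⟩ := hτ
      refine ⟨h1, lt_of_lt_of_le h2 ?_⟩
      have hmono := ham_mono hn42 hℓ1 hsym hi τ
      have hc0 : (0:ℝ) ≤ (n:ℝ) / (γ * k) := by positivity
      exact mul_le_mul_of_nonneg_left (by exact_mod_cast hmono) hc0
    have hne := tauSet_nonempty hk1 hγ hℓ1 hn S2 hS2 (hcub2 i hi)
    exact Nat.sInf_le (hsub (Nat.sInf_mem hne))
  refine ⟨fun i hi => hcub1 i hi, htau1, ?_⟩
  intro x hx
  simp only [fc, Finset.mem_biUnion] at hx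
  obtain ⟨i, hicub, hximg⟩ := hx
  rw [Finset.mem_image] at hximg
  obtain ⟨jz, hjz, rfl⟩ := hximg
  rw [mem_coeM_iff] at hjz
  obtain ⟨j, hjM, rfl⟩ := hjz
  unfold Mset Rset at hjM
  simp only [Finset.mem_filter, Finset.mem_Icc] at hjM
  obtain ⟨⟨hij, hjt⟩, hjne⟩ := hjM
  have hi1 : 1 ≤ i := by
    simp only [cubicSet, Finset.mem_filter, Finset.mem_Icc] at hicub; omega
  have hj1 : 1 ≤ j := by omega
  have ht1 : 1 ≤ tau n ℓ k γ S' i := by omega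
  rw [Finset.mem_union]
  by_cases hw : S1 ((j - 1) % n + 1) = S2 ((j - 1) % n + 1)
  · left
    rw [Finset.mem_inter]
    have hjl : cext n S' j = Sum.inl (cext n S1 j) := by
      obtain (⟨_, h2⟩ | ⟨hne2, _⟩) := cextS'_cases hS' (n := n) j
      · exact h2
      · exact absurd hw hne2
    have hjl2 : cext n S' j = Sum.inl (cext n S2 j) := by
      obtain (⟨_, h2⟩ | ⟨hne2, _⟩) := cextS'_cases hsym (n := n) j
      · exact h2
      · exact absurd hw.symm hne2
    constructor
    · simp only [fc, Finset.mem_biUnion]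
      refine ⟨i, hcub1 i hicub, ?_⟩
      rw [Finset.mem_image]
      refine ⟨(j : ℤ), ?_, rfl⟩
      rw [mem_coeM_iff]
      refine ⟨j, ?_, rfl⟩
      unfold Mset Rset
      simp only [Finset.mem_filter, Finset.mem_Icc]
      have htle := htau1 i hicub
      refine ⟨⟨hij, by omega⟩, ?_⟩
      intro hcon
      apply hjne
      rw [hjl, muExt_inl hn42 hℓ1 hS' hicub (j - i + 1), hcon]
    · simp only [fc, Finset.mem_biUnion]
      refine ⟨i, hcub2 i hicub, ?_⟩
      rw [Finset.mem_image]
      refine ⟨(j : ℤ), ?_, rfl⟩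
      rw [mem_coeM_iff]
      refine ⟨j, ?_, rfl⟩
      unfold Mset Rset
      simp only [Finset.mem_filter, Finset.mem_Icc]
      have htle := htau2 i hicub
      refine ⟨⟨hij, by omega⟩, ?_⟩
      intro hcon
      apply hjne
      rw [hjl2, muExt_inl hn42 hℓ1 hsym hicub (j - i + 1), hcon]
  · right
    rw [Finset.mem_filter, Finset.mem_Icc]
    rw [zwrap_natCast n j hj1]
    have hlt : (j - 1) % n < n := Nat.mod_lt _ (by omega)
    exact ⟨⟨by omega, by omega⟩, hw⟩
end
end

section
/- Let α be a positive real and β a nonnegative integer with ⌊α⌋ > 2β. If a string S ∈ Σ^n is (α,β)-pseudo-periodic, then its (α,β)-base is unique; that is, if S', S'' ∈ Σ^n both satisfy root(S') ≤ n/α, root(S'') ≤ n/α, Ham(S,S') ≤ β, and Ham(S,S'') ≤ β, then S' = S''. -/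
open Finset
open scoped Classical

noncomputable section

variable {α : Type*}

section Aux

variable {α : Type*}

lemma myReduce {n p : ℕ} {w : ℕ → α} (hp : IsPeriod n w p) :
    ∀ x, 1 ≤ x → x ≤ n → w x = w ((x - 1) % p + 1) := by
  obtain ⟨hp1, hper⟩ := hp
  intro x
  induction x using Nat.strong_induction_on with
  | _ x ih =>
    intro h1 h2
    by_cases hxp : x ≤ p
    · have hlt : x - 1 < p := by omega
      rw [Nat.mod_eq_of_lt hlt]
      congr 1; omega
    · push_neg at hxp
      have h3 : w (x - p) = w x := by
        have := hper (x - p) (by omega) (by omega)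
        rwa [Nat.sub_add_cancel (by omega)] at this
      rw [← h3, ih (x - p) (by omega) (by omega) (by omega)]
      have hmod : (x - 1) % p = (x - p - 1) % p := by
        conv_lhs => rw [show x - 1 = (x - p - 1) + p by omega]
        rw [Nat.add_mod_right]
      rw [hmod]

lemma classConst {n p : ℕ} {w : ℕ → α} (hp : IsPeriod n w p) :
    ∀ x y, 1 ≤ x → x ≤ n → 1 ≤ y → y ≤ n → x ≡ y [MOD p] → w x = w y := by
  intro x y hx1 hx2 hy1 hy2 hxy
  rw [myReduce hp x hx1 hx2, myReduce hp y hy1 hy2]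
  have h : x - 1 ≡ y - 1 [MOD p] := by
    apply Nat.ModEq.add_right_cancel' 1
    simpa [Nat.sub_add_cancel hx1, Nat.sub_add_cancel hy1] using hxy
  have h2 : (x - 1) % p = (y - 1) % p := h
  rw [h2]

lemma crt_pos (r₁ r₂ c d : ℕ) (h : c ≡ d [MOD Nat.gcd r₁ r₂]) (hr₁ : 1 ≤ r₁) (hr₂ : 1 ≤ r₂) :
    ∃ z, 1 ≤ z ∧ z ≤ Nat.lcm r₁ r₂ ∧ z ≡ c [MOD r₁] ∧ z ≡ d [MOD r₂] := by
  obtain ⟨k, hk1, hk2⟩ := Nat.chineseRemainder' h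
  set L := Nat.lcm r₁ r₂ with hL
  have hLpos : 0 < L := Nat.lcm_pos hr₁ hr₂
  have hzk : (if k % L = 0 then L else k % L) ≡ k [MOD L] := by
    by_cases hk : k % L = 0
    · simp only [hk, if_pos]
      show L % L = k % L
      simp [Nat.mod_self, hk]
    · simp only [hk, if_neg, if_false]
      exact Nat.mod_modEq k L
  refine ⟨if k % L = 0 then L else k % L, ?_, ?_, ?_, ?_⟩
  · by_cases hk : k % L = 0 <;> simp [hk] <;> omega
  · by_cases hk : k % L = 0 <;> simp [hk]
    · exact le_of_lt (Nat.mod_lt _ hLpos)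
  · exact ((hzk.of_dvd (Nat.dvd_lcm_left r₁ r₂)).trans hk1)
  · exact ((hzk.of_dvd (Nat.dvd_lcm_right r₁ r₂)).trans hk2)

lemma card_class_ge {n L z : ℕ} (hL : L ∣ n) (hLpos : 0 < L) (hz1 : 1 ≤ z) (hzn : z ≤ n) :
    n / L ≤ ((Finset.Icc 1 n).filter fun u => u ≡ z [MOD L]).card := by
  have hmul : L * (n / L) = n := Nat.mul_div_cancel' hL
  have hmain := Finset.card_le_card_of_injOn (s := Finset.range (n / L))
      (t := (Finset.Icc 1 n).filter fun u => u ≡ z [MOD L])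
      (fun s => (z - 1) % L + 1 + s * L) ?_ ?_
  · simpa using hmain
  · intro s hs
    rw [Finset.mem_coe, Finset.mem_range] at hs
    simp only [Finset.mem_coe, Finset.mem_filter, Finset.mem_Icc]
    have hmlt : (z - 1) % L < L := Nat.mod_lt _ hLpos
    have hmul' : (n / L) * L = n := by rw [Nat.mul_comm]; exact hmul
    have h7 : s * L + L ≤ n := by
      have h6 := Nat.mul_le_mul_right L (show s + 1 ≤ n / L by omega)
      rwa [Nat.succ_mul, hmul'] at h6
    refine ⟨⟨by omega, by omega⟩, ?_⟩
    have h1 : (z - 1) % L + 1 + s * L ≡ (z - 1) % L + 1 [MOD L] := by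
      show _ % L = _ % L
      exact Nat.add_mul_mod_self_right _ _ _
    have h2 : (z - 1) % L + 1 ≡ z [MOD L] := by
      have := Nat.ModEq.add_right 1 (Nat.mod_modEq (z - 1) L)
      rwa [Nat.sub_add_cancel hz1] at this
    exact h1.trans h2
  · intro s₁ h₁ s₂ h₂ heq
    simp only at heq
    have : s₁ * L = s₂ * L := by omega
    exact Nat.eq_of_mul_eq_mul_right hLpos this

lemma key {n r₁ r₂ : ℕ} {A B : ℕ → α} (hn : 1 ≤ n)
    (h1 : IsPeriod n A r₁) (h2 : IsPeriod n B r₂)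
    (d1 : r₁ ∣ n) (d2 : r₂ ∣ n)
    (hc : ((Finset.Icc 1 n).filter fun z => A z ≠ B z).card * r₂ < n)
    (x₀ : ℕ) (hx1 : 1 ≤ x₀) (hx2 : x₀ ≤ n) :
    ∃ y, (1 ≤ y ∧ y ≤ n) ∧ y ≡ x₀ [MOD Nat.gcd r₁ r₂] ∧
      ∀ z, 1 ≤ z → z ≤ n → z ≡ x₀ [MOD Nat.gcd r₁ r₂] → B z = A y := by
  have hr₁ : 1 ≤ r₁ := h1.1
  have hr₂ : 1 ≤ r₂ := h2.1
  set g := Nat.gcd r₁ r₂ with hg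
  set L := Nat.lcm r₁ r₂ with hL
  have hgpos : 0 < g := Nat.gcd_pos_of_pos_left _ hr₁
  have hLpos : 0 < L := Nat.lcm_pos hr₁ hr₂
  have hLdvd : L ∣ n := Nat.lcm_dvd d1 d2
  have hLn : L ≤ n := Nat.le_of_dvd (by omega) hLdvd
  have hgr₁ : g ∣ r₁ := Nat.gcd_dvd_left _ _
  by_cases hclean : ∃ y, (1 ≤ y ∧ y ≤ n) ∧ y ≡ x₀ [MOD g] ∧
      ∀ z, 1 ≤ z → z ≤ n → z ≡ y [MOD r₁] → A z = B z
  · obtain ⟨y, hy, hyx, hyc⟩ := hclean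
    refine ⟨y, hy, hyx, ?_⟩
    intro z hz1 hz2 hzx
    have hzy : y ≡ z [MOD g] := hyx.trans hzx.symm
    obtain ⟨w, hw1, hw2, hwy, hwz⟩ := crt_pos r₁ r₂ y z hzy hr₁ hr₂
    have hwn : w ≤ n := le_trans hw2 hLn
    calc B z = B w := classConst h2 z w hz1 hz2 hw1 hwn hwz.symm
    _ = A w := (hyc w hw1 hwn hwy).symm
    _ = A y := classConst h1 w y hw1 hwn hy.1 hy.2 hwy
  · exfalso
    push_neg at hclean
    -- representatives y t for t < r₁ / g
    set Y : ℕ → ℕ := fun t => (x₀ + t * g - 1) % r₁ + 1 with hY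
    have hYmem : ∀ t, 1 ≤ Y t ∧ Y t ≤ n := by
      intro t
      have hmlt : (x₀ + t * g - 1) % r₁ < r₁ := Nat.mod_lt _ (by omega)
      have hr1n : r₁ ≤ n := Nat.le_of_dvd (by omega) d1
      simp only [hY]
      omega
    have hYmod : ∀ t, Y t ≡ x₀ + t * g [MOD r₁] := by
      intro t
      have h2' : Y t ≡ (x₀ + t * g - 1) + 1 [MOD r₁] :=
        Nat.ModEq.add_right 1 (Nat.mod_modEq _ _)
      rwa [show x₀ + t * g - 1 + 1 = x₀ + t * g by omega] at h2'
    have hYg : ∀ t, Y t ≡ x₀ [MOD g] := by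
      intro t
      have h3 : Y t ≡ x₀ + t * g [MOD g] := (hYmod t).of_dvd hgr₁
      have h4 : x₀ + t * g ≡ x₀ [MOD g] := by
        show _ % g = _ % g
        exact Nat.add_mul_mod_self_right _ _ _
      exact h3.trans h4
    have hex : ∀ t, ∃ z, 1 ≤ z ∧ z ≤ n ∧ z ≡ Y t [MOD r₁] ∧ A z ≠ B z := by
      intro t
      exact hclean (Y t) (hYmem t) (hYg t)
    choose Z hZ1 hZ2 hZmod hZne using hex
    have hZmem : ∀ t, 1 ≤ Z t ∧ Z t ≤ n := fun t => ⟨hZ1 t, hZ2 t⟩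
    set F : ℕ → Finset ℕ := fun t => (Finset.Icc 1 n).filter fun u => u ≡ Z t [MOD L] with hF
    have hFsub : ∀ t, F t ⊆ (Finset.Icc 1 n).filter fun z => A z ≠ B z := by
      intro t u hu
      rw [hF] at hu
      simp only [Finset.mem_filter, Finset.mem_Icc] at hu ⊢
      obtain ⟨⟨hu1, hu2⟩, hum⟩ := hu
      refine ⟨⟨hu1, hu2⟩, ?_⟩
      have hA : A u = A (Z t) :=
        classConst h1 u (Z t) hu1 hu2 (hZmem t).1 (hZmem t).2 (hum.of_dvd (Nat.dvd_lcm_left _ _))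
      have hB : B u = B (Z t) :=
        classConst h2 u (Z t) hu1 hu2 (hZmem t).1 (hZmem t).2 (hum.of_dvd (Nat.dvd_lcm_right _ _))
      rw [hA, hB]
      exact hZne t
    have hdisj : ∀ t₁ ∈ Finset.range (r₁ / g), ∀ t₂ ∈ Finset.range (r₁ / g), t₁ ≠ t₂ →
        Disjoint (F t₁) (F t₂) := by
      intro t₁ ht₁ t₂ ht₂ hne
      rw [Finset.mem_range] at ht₁ ht₂
      rw [Finset.disjoint_left]
      intro u hu₁ hu₂
      rw [hF] at hu₁ hu₂
      simp only [Finset.mem_filter] at hu₁ hu₂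
      have hZZ : Z t₁ ≡ Z t₂ [MOD r₁] :=
        ((hu₁.2.symm.trans hu₂.2).of_dvd (Nat.dvd_lcm_left _ _))
      have h5 : x₀ + t₁ * g ≡ x₀ + t₂ * g [MOD r₁] :=
        (((hYmod t₁).symm.trans (hZmod t₁).symm).trans (hZZ.trans ((hZmod t₂).trans (hYmod t₂))))
      have h6 : t₁ * g ≡ t₂ * g [MOD r₁] := by
        have := Nat.ModEq.add_left_cancel' x₀ h5
        exact this
      obtain ⟨u', hu'⟩ := hgr₁
      have ht₁g : t₁ * g < r₁ := by
        have : t₁ < u' := by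
          rw [hu', Nat.mul_div_cancel_left _ hgpos] at ht₁; exact ht₁
        calc t₁ * g < u' * g := (Nat.mul_lt_mul_right hgpos).mpr this
        _ = r₁ := by rw [hu', Nat.mul_comm]
      have ht₂g : t₂ * g < r₁ := by
        have : t₂ < u' := by
          rw [hu', Nat.mul_div_cancel_left _ hgpos] at ht₂; exact ht₂
        calc t₂ * g < u' * g := (Nat.mul_lt_mul_right hgpos).mpr this
        _ = r₁ := by rw [hu', Nat.mul_comm]
      have h7 : t₁ * g = t₂ * g := by
        have h8 : t₁ * g % r₁ = t₂ * g % r₁ := h6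
        rwa [Nat.mod_eq_of_lt ht₁g, Nat.mod_eq_of_lt ht₂g] at h8
      exact hne (Nat.eq_of_mul_eq_mul_right hgpos h7)
    have hcard : (r₁ / g) * (n / L) ≤
        ((Finset.Icc 1 n).filter fun z => A z ≠ B z).card := by
      calc (r₁ / g) * (n / L) = ∑ _t ∈ Finset.range (r₁ / g), (n / L) := by
            rw [Finset.sum_const, Finset.card_range, smul_eq_mul]
      _ ≤ ∑ t ∈ Finset.range (r₁ / g), (F t).card := by
            apply Finset.sum_le_sum
            intro t _
            exact card_class_ge hLdvd hLpos (hZmem t).1 (hZmem t).2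
      _ = ((Finset.range (r₁ / g)).biUnion F).card := (Finset.card_biUnion hdisj).symm
      _ ≤ _ := Finset.card_le_card (Finset.biUnion_subset.mpr fun t _ => hFsub t)
    -- arithmetic: (r₁/g) * (n/L) * r₂ = n
    have harith : (r₁ / g) * (n / L) * r₂ = n := by
      obtain ⟨u', hu'⟩ := hgr₁
      obtain ⟨m, hm⟩ := hLdvd
      have hgl : g * L = r₁ * r₂ := Nat.gcd_mul_lcm r₁ r₂
      have hLu : L = u' * r₂ := by
        have : g * L = g * (u' * r₂) := by rw [hgl, hu']; ring
        exact Nat.eq_of_mul_eq_mul_left hgpos this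
      rw [hu', Nat.mul_div_cancel_left _ hgpos, hm, Nat.mul_div_cancel_left _ hLpos]
      rw [hLu] at hm ⊢
      ring
    have : n ≤ ((Finset.Icc 1 n).filter fun z => A z ≠ B z).card * r₂ := by
      calc n = (r₁ / g) * (n / L) * r₂ := harith.symm
      _ ≤ _ := Nat.mul_le_mul_right _ hcard
    omega

end Aux

/-- If `⌊a⌋ > 2b`, then the `(a,b)`-base of an `(a,b)`-pseudo-periodic string is unique. -/
theorem stmt15 {α : Type*} (n : ℕ) (a : ℝ) (ha : 0 < a) (b : ℕ)
    (hab : 2 * (b : ℤ) < ⌊a⌋)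
    (S S' S'' : ℕ → α)
    (h1 : (root n S' : ℝ) ≤ (n : ℝ) / a) (h2 : ham n S S' ≤ b)
    (h3 : (root n S'' : ℝ) ≤ (n : ℝ) / a) (h4 : ham n S S'' ≤ b) :
    ∀ i ∈ Finset.Icc 1 n, S' i = S'' i := by
  intro i hi
  rw [Finset.mem_Icc] at hi
  have hn : 1 ≤ n := le_trans hi.1 hi.2
  have hmem' : root n S' ∣ n ∧ IsPeriod n S' (root n S') := by
    have hmem : n ∈ {r | r ∣ n ∧ IsPeriod n S' r} :=
      ⟨dvd_rfl, hn, fun j hj1 hj2 => absurd hj2 (by omega)⟩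
    exact Nat.sInf_mem ⟨n, hmem⟩
  have hmem'' : root n S'' ∣ n ∧ IsPeriod n S'' (root n S'') := by
    have hmem : n ∈ {r | r ∣ n ∧ IsPeriod n S'' r} :=
      ⟨dvd_rfl, hn, fun j hj1 hj2 => absurd hj2 (by omega)⟩
    exact Nat.sInf_mem ⟨n, hmem⟩
  set r₁ := root n S' with hr₁def
  set r₂ := root n S'' with hr₂def
  have hr₁pos : 1 ≤ r₁ := hmem'.2.1
  have hr₂pos : 1 ≤ r₂ := hmem''.2.1
  have ha1 : ((2 * b + 1 : ℕ) : ℝ) ≤ a := by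
    have hfl : ((2 * (b : ℤ) + 1 : ℤ) : ℝ) ≤ ((⌊a⌋ : ℤ) : ℝ) := by
      exact_mod_cast (by omega : 2 * (b : ℤ) + 1 ≤ ⌊a⌋)
    have hfl2 := Int.floor_le a
    push_cast at hfl ⊢
    linarith
  have hbound : ∀ r : ℕ, (r : ℝ) ≤ (n : ℝ) / a → (2 * b + 1) * r ≤ n := by
    intro r hr
    have h1' : (r : ℝ) * a ≤ n := (le_div_iff₀ ha).mp hr
    have h2' : ((2 * b + 1 : ℕ) : ℝ) * r ≤ (n : ℝ) := by
      calc ((2 * b + 1 : ℕ) : ℝ) * r ≤ a * r :=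
            mul_le_mul_of_nonneg_right ha1 (Nat.cast_nonneg r)
      _ = (r : ℝ) * a := mul_comm _ _
      _ ≤ n := h1'
    exact_mod_cast h2'
  have hb1 : (2 * b + 1) * r₁ ≤ n := hbound r₁ h1
  have hb2 : (2 * b + 1) * r₂ ≤ n := hbound r₂ h3
  have hmis : ((Finset.Icc 1 n).filter fun z => S' z ≠ S'' z).card ≤ 2 * b := by
    have hsub : ((Finset.Icc 1 n).filter fun z => S' z ≠ S'' z) ⊆
        ((Finset.Icc 1 n).filter fun z => S z ≠ S' z) ∪
        ((Finset.Icc 1 n).filter fun z => S z ≠ S'' z) := by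
      intro z hz
      simp only [Finset.mem_filter, Finset.mem_union] at hz ⊢
      by_cases h : S z = S' z
      · exact Or.inr ⟨hz.1, by rw [h]; exact hz.2⟩
      · exact Or.inl ⟨hz.1, h⟩
    have hham1 : ((Finset.Icc 1 n).filter fun z => S z ≠ S' z).card ≤ b := h2
    have hham2 : ((Finset.Icc 1 n).filter fun z => S z ≠ S'' z).card ≤ b := h4
    calc ((Finset.Icc 1 n).filter fun z => S' z ≠ S'' z).card
        ≤ (((Finset.Icc 1 n).filter fun z => S z ≠ S' z) ∪
           ((Finset.Icc 1 n).filter fun z => S z ≠ S'' z)).card := Finset.card_le_card hsub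
      _ ≤ ((Finset.Icc 1 n).filter fun z => S z ≠ S' z).card +
          ((Finset.Icc 1 n).filter fun z => S z ≠ S'' z).card := Finset.card_union_le _ _
      _ ≤ 2 * b := by omega
  have hmis2 : ((Finset.Icc 1 n).filter fun z => S'' z ≠ S' z).card ≤ 2 * b := by
    have heq : ((Finset.Icc 1 n).filter fun z => S'' z ≠ S' z) =
        ((Finset.Icc 1 n).filter fun z => S' z ≠ S'' z) :=
      Finset.filter_congr fun z _ => by simp [ne_comm]
    rw [heq]; exact hmis
  have hc1 : ((Finset.Icc 1 n).filter fun z => S' z ≠ S'' z).card * r₂ < n := by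
    calc ((Finset.Icc 1 n).filter fun z => S' z ≠ S'' z).card * r₂
        ≤ (2 * b) * r₂ := Nat.mul_le_mul_right _ hmis
      _ < (2 * b + 1) * r₂ :=
          (Nat.mul_lt_mul_right (show 0 < r₂ by omega)).mpr (by omega)
      _ ≤ n := hb2
  have hc2 : ((Finset.Icc 1 n).filter fun z => S'' z ≠ S' z).card * r₁ < n := by
    calc ((Finset.Icc 1 n).filter fun z => S'' z ≠ S' z).card * r₁
        ≤ (2 * b) * r₁ := Nat.mul_le_mul_right _ hmis2
      _ < (2 * b + 1) * r₁ :=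
          (Nat.mul_lt_mul_right (show 0 < r₁ by omega)).mpr (by omega)
      _ ≤ n := hb1
  obtain ⟨y, hy, hyx, hyall⟩ := key hn hmem'.2 hmem''.2 hmem'.1 hmem''.1 hc1 i hi.1 hi.2
  obtain ⟨d, hd, hdx, hdall⟩ := key hn hmem''.2 hmem'.2 hmem''.1 hmem'.1 hc2 i hi.1 hi.2
  have hg : Nat.gcd r₂ r₁ = Nat.gcd r₁ r₂ := Nat.gcd_comm _ _
  have e1 : S'' i = S' y := hyall i hi.1 hi.2 (Nat.ModEq.refl _)
  have e2 : S' i = S'' d := hdall i hi.1 hi.2 (Nat.ModEq.refl _)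
  have e3 : S'' d = S' y := hyall d hd.1 hd.2 (hg ▸ hdx)
  rw [e2, e3, e1]
end
end

section
/- Assume additionally that 4k·ln n ≤ n. Let h : Σ^{3ℓ} → {0,1} be a random function whose values h(u), for u ∈ Σ^{3ℓ}, are independent with Pr[h(u) = 1] = 4k·ln n / n (i.e., h is distributed according to the product of Bernoulli(4k·ln n/n) variables indexed by Σ^{3ℓ}). For S ∈ Σ^n define f_n(S) = {i ∈ N(S) : h(S*[i..i+3ℓ−1]) = 1}. Then for every fixed S ∈ Σ^n, Pr[|f_n(S)| ≥ 8k·ln n] ≤ n^{−4/(9γ)}. -/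
open Finset
open scoped Classical

noncomputable section

variable {α : Type*}

open scoped ENNReal

lemma div_le_div_of_nonneg_right'' {a b c : ℝ} (h : a ≤ b) (hc : 0 < c) :
    a / c ≤ b / c := by
  rw [div_le_div_iff₀ hc hc]
  nlinarith

/-- Positions in `[1..n]` with pairwise gaps `> ℓ` number at most `(n-1)/(ℓ+1) + 1`. -/
lemma aux_sparse_card (n ℓ : ℕ) (T : Finset ℕ) (hT : T ⊆ Finset.Icc 1 n)
    (hgap : ∀ i ∈ T, ∀ j ∈ T, i < j → ℓ < j - i) :
    T.card ≤ (n - 1) / (ℓ + 1) + 1 := by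
  classical
  have hmono : ∀ i ∈ T, ∀ j ∈ T, i < j → (i - 1) / (ℓ + 1) < (j - 1) / (ℓ + 1) := by
    intro i hi j hj hij
    have hg := hgap i hi j hj hij
    have hi1 : 1 ≤ i := by
      have := hT hi
      rw [Finset.mem_Icc] at this
      exact this.1
    have h1 : i - 1 + (ℓ + 1) ≤ j - 1 := by omega
    have h5 : (i - 1 + (ℓ + 1)) / (ℓ + 1) ≤ (j - 1) / (ℓ + 1) :=
      Nat.div_le_div_right h1
    have h6 : (i - 1 + (ℓ + 1)) / (ℓ + 1) = (i - 1) / (ℓ + 1) + 1 :=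
      Nat.add_div_right _ (by omega)
    omega
  have hinj : Set.InjOn (fun i => (i - 1) / (ℓ + 1)) T := by
    intro i hi j hj hij
    by_contra hne
    rcases lt_or_gt_of_ne hne with h | h
    · exact absurd hij (Nat.ne_of_lt (hmono i hi j hj h))
    · exact absurd hij.symm (Nat.ne_of_lt (hmono j hj i hi h))
  have himg : T.image (fun i => (i - 1) / (ℓ + 1)) ⊆ Finset.Icc 0 ((n - 1) / (ℓ + 1)) := by
    intro x hx
    rw [Finset.mem_image] at hx
    obtain ⟨i, hi, rfl⟩ := hx
    have := hT hi
    rw [Finset.mem_Icc] at this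
    rw [Finset.mem_Icc]
    exact ⟨Nat.zero_le _, Nat.div_le_div_right (by omega)⟩
  calc T.card = (T.image (fun i => (i - 1) / (ℓ + 1))).card :=
        (Finset.card_image_of_injOn hinj).symm
    _ ≤ (Finset.Icc 0 ((n - 1) / (ℓ + 1))).card := Finset.card_le_card himg
    _ = (n - 1) / (ℓ + 1) + 1 := by simp [Nat.card_Icc]

/-- Chord bound for `exp` on `[0, log 2]`. -/
lemma aux_exp_le (y : ℝ) (h0 : 0 ≤ y) (h1 : y ≤ Real.log 2) :
    Real.exp y ≤ 1 + y / Real.log 2 := by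
  have hL : 0 < Real.log 2 := Real.log_pos one_lt_two
  have hb0 : 0 ≤ y / Real.log 2 := div_nonneg h0 hL.le
  have hb1 : y / Real.log 2 ≤ 1 := (div_le_one hL).mpr h1
  have ha0 : 0 ≤ 1 - y / Real.log 2 := by linarith
  have hcx := convexOn_exp.2 (Set.mem_univ (0 : ℝ)) (Set.mem_univ (Real.log 2)) ha0 hb0
    (by ring)
  simp only [smul_eq_mul, mul_zero, zero_add, Real.exp_zero, mul_one] at hcx
  rw [Real.exp_log two_pos] at hcx
  have hy : y / Real.log 2 * Real.log 2 = y := div_mul_cancel₀ _ hL.ne'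
  rw [hy] at hcx
  linarith

open MeasureTheory in
/-- Lintegral of a product of coordinate functions over a finite product of Bernoulli
measures. -/
lemma aux_pi_bernoulli {I : Type*} [Fintype I] (p' : NNReal) (hp' : p' ≤ 1)
    (g : I → Bool → ℝ≥0∞) :
    ∫⁻ h : I → Bool, ∏ v, g v (h v)
        ∂(Measure.pi fun _ : I => (PMF.bernoulli p' hp').toMeasure)
      = ∏ v, (g v true * (p' : ℝ≥0∞) + g v false * (1 - p')) := by
  classical
  rw [MeasureTheory.lintegral_fintype]
  have hsingle : ∀ h : I → Bool,
      (Measure.pi fun _ : I => (PMF.bernoulli p' hp').toMeasure) {h}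
        = ∏ v, (PMF.bernoulli p' hp').toMeasure {h v} := by
    intro h
    have hset : ({h} : Set (I → Bool)) = Set.pi Set.univ fun v => {h v} := by
      ext g'
      simp [Set.mem_pi, funext_iff]
    rw [hset, MeasureTheory.Measure.pi_pi]
  have hb : ∀ b : Bool, (PMF.bernoulli p' hp').toMeasure {b} = cond b (p' : ℝ≥0∞) (1 - p') := by
    intro b
    rw [PMF.toMeasure_apply_singleton _ _ (measurableSet_singleton b), PMF.bernoulli_apply]
    cases b <;> simp [ENNReal.coe_sub]
  calc ∑ h : I → Bool, (∏ v, g v (h v)) *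
          (Measure.pi fun _ : I => (PMF.bernoulli p' hp').toMeasure) {h}
      = ∑ h : I → Bool, ∏ v, (g v (h v) * cond (h v) (p' : ℝ≥0∞) (1 - p')) := by
        refine Finset.sum_congr rfl fun h _ => ?_
        rw [hsingle h, ← Finset.prod_mul_distrib]
        exact Finset.prod_congr rfl fun v _ => by rw [hb]
    _ = ∑ h ∈ Fintype.piFinset (fun _ : I => (Finset.univ : Finset Bool)),
          ∏ v, (g v (h v) * cond (h v) (p' : ℝ≥0∞) (1 - p')) := by rw [Fintype.piFinset_univ]
    _ = ∏ v, ∑ b : Bool, g v b * cond b (p' : ℝ≥0∞) (1 - p') :=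
        (Finset.prod_univ_sum (fun _ : I => (Finset.univ : Finset Bool))
          (fun v b => g v b * cond b (p' : ℝ≥0∞) (1 - p'))).symm
    _ = ∏ v, (g v true * (p' : ℝ≥0∞) + g v false * (1 - p')) := by
        refine Finset.prod_congr rfl fun v _ => ?_
        rw [Fintype.sum_bool]
        rfl

set_option maxHeartbeats 1000000 in
open MeasureTheory in
/-- Assume `4k·ln n ≤ n`. Let `h : Σ^{3ℓ} → {0,1}` be a random function with values
independent Bernoulli(`4k·ln n / n`), and let
`f_n(S) = {i ∈ N(S) : h(S*[i..i+3ℓ-1]) = 1}` (where `N(S)` is the set of non-cubic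
positions). Then for every fixed `S ∈ Σ^n`, `Pr[|f_n(S)| ≥ 8k·ln n] ≤ n^(-4/(9γ))`. -/
theorem stmt17 {α : Type*} [Fintype α] (n k ℓ : ℕ) (γ : ℝ)
    (hk1 : 1 ≤ k) (hkn : k ≤ n) (hγ : 14 ≤ γ) (hℓ1 : 1 ≤ ℓ)
    (hn : (n : ℝ) = 3 * γ * k * ℓ)
    (hlog : 4 * (k : ℝ) * Real.log n ≤ (n : ℝ))
    (S : ℕ → α) :
    Measure.pi (fun _ : Fin (3 * ℓ) → α =>
        (PMF.bernoulli (Real.toNNReal (4 * (k : ℝ) * Real.log n / (n : ℝ)))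
          (by
            have hn0 : (0 : ℝ) < (n : ℝ) := by
              have h1 : (1 : ℕ) ≤ n := hk1.trans hkn
              exact_mod_cast Nat.lt_of_lt_of_le Nat.zero_lt_one h1
            calc Real.toNNReal (4 * (k : ℝ) * Real.log n / (n : ℝ))
                ≤ Real.toNNReal 1 :=
                  Real.toNNReal_le_toNNReal ((div_le_one hn0).mpr hlog)
              _ = 1 := Real.toNNReal_one)).toMeasure)
      {h : (Fin (3 * ℓ) → α) → Bool |
        8 * (k : ℝ) * Real.log n ≤
          (((Finset.Icc 1 n).filter fun i =>
              ℓ < rho n ℓ S i ∧ h (fun j => frag n S i (j.1 + 1)) = true).card : ℝ)} ≤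
      ENNReal.ofReal ((n : ℝ) ^ (-(4 / (9 * γ)))) := by
  classical
  have H : ∀ q : ℝ, q = 4 * (k : ℝ) * Real.log n / (n : ℝ) →
      ∀ hple : Real.toNNReal q ≤ 1,
      Measure.pi (fun _ : Fin (3 * ℓ) → α =>
          (PMF.bernoulli (Real.toNNReal q) hple).toMeasure)
        {h : (Fin (3 * ℓ) → α) → Bool |
          8 * (k : ℝ) * Real.log n ≤
            (((Finset.Icc 1 n).filter fun i =>
                ℓ < rho n ℓ S i ∧ h (fun j => frag n S i (j.1 + 1)) = true).card : ℝ)} ≤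
        ENNReal.ofReal ((n : ℝ) ^ (-(4 / (9 * γ)))) := by
    intro p hpdef hple
    -- basic numeric facts
    have hk0 : (0 : ℝ) < k := by exact_mod_cast hk1
    have hk1' : (1 : ℝ) ≤ k := by exact_mod_cast hk1
    have hℓ0 : (0 : ℝ) < ℓ := by exact_mod_cast hℓ1
    have hℓ1' : (1 : ℝ) ≤ ℓ := by exact_mod_cast hℓ1
    have hγ0 : (0 : ℝ) < γ := lt_of_lt_of_le (by norm_num) hγ
    have hγk : (14 : ℝ) ≤ γ * k := by nlinarith
    have hn42 : (42 : ℝ) ≤ (n : ℝ) := by rw [hn]; nlinarith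
    have hn0' : (0 : ℝ) < (n : ℝ) := by linarith
    have hn1 : (1 : ℝ) < (n : ℝ) := by linarith
    have hlogn : 0 < Real.log n := Real.log_pos hn1
    set L : ℝ := Real.log 2 with hLdef
    have hL : 0.6931471803 < L := Real.log_two_gt_d9
    set C : ℝ := 3 * γ * k + 1 with hCdef
    have hC0 : (0 : ℝ) < C := by rw [hCdef]; nlinarith
    set t : ℝ := L / C with htdef
    have ht0 : 0 < t := by rw [htdef]; exact div_pos (by linarith) hC0
    have hp0 : 0 < p := by
      rw [hpdef]
      exact div_pos (mul_pos (by nlinarith) hlogn) hn0'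
    have hp1 : p ≤ 1 := by rw [hpdef]; exact (div_le_one hn0').mpr hlog
    -- combinatorial set-up
    set u : ℕ → (Fin (3 * ℓ) → α) := fun i => fun j => frag n S i (j.1 + 1) with hudef
    set NC : Finset ℕ := (Finset.Icc 1 n).filter (fun i => ℓ < rho n ℓ S i) with hNCdef
    set U : Finset (Fin (3 * ℓ) → α) := NC.image u with hUdef
    set cv : (Fin (3 * ℓ) → α) → ℕ := fun v => (NC.filter fun i => u i = v).card with hcvdef
    -- positions with the same fragment are far apart
    have hgap : ∀ v : Fin (3 * ℓ) → α, ∀ i ∈ NC.filter (fun i => u i = v),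
        ∀ j ∈ NC.filter (fun i => u i = v), i < j → ℓ < j - i := by
      intro v i hi j hj hij
      by_contra hle
      push_neg at hle
      rw [Finset.mem_filter] at hi hj
      have hiNC := hi.1
      rw [hNCdef, Finset.mem_filter] at hiNC
      have hirho : ℓ < rho n ℓ S i := hiNC.2
      have huv : u i = u j := hi.2.trans hj.2.symm
      have hper : IsPeriod (3 * ℓ) (frag n S i) (j - i) := by
        refine ⟨by omega, ?_⟩
        intro m hm hmle
        have hm3 : m ≤ 3 * ℓ := by omega
        have h1 : frag n S i (m + (j - i)) = frag n S j m := by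
          show cext n S (i + (m + (j - i)) - 1) = cext n S (j + m - 1)
          congr 1
          omega
        have h2 : frag n S j m = frag n S i m := by
          have hfx := congrFun huv.symm ⟨m - 1, by omega⟩
          rw [hudef] at hfx
          simpa [Nat.sub_add_cancel hm] using hfx
        rw [h1, h2]
      have hrle : rho n ℓ S i ≤ j - i := Nat.sInf_le hper
      omega
    -- fiber cardinality bound
    have hcvC : ∀ v : Fin (3 * ℓ) → α, (cv v : ℝ) ≤ C := by
      intro v
      have hsub : NC.filter (fun i => u i = v) ⊆ Finset.Icc 1 n := by
        intro i hi
        rw [Finset.mem_filter] at hi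
        have := hi.1
        rw [hNCdef, Finset.mem_filter] at this
        exact this.1
      have h1 : cv v ≤ (n - 1) / (ℓ + 1) + 1 := by
        rw [hcvdef]
        exact aux_sparse_card n ℓ _ hsub (hgap v)
      have h2 : ((n - 1) / (ℓ + 1) : ℕ) ≤ n / ℓ :=
        le_trans (Nat.div_le_div_right (Nat.sub_le n 1))
          (Nat.div_le_div_left (Nat.le_succ ℓ) hℓ1)
      have h3 : ((n / ℓ : ℕ) : ℝ) ≤ (n : ℝ) / (ℓ : ℝ) := Nat.cast_div_le
      have h4 : (n : ℝ) / (ℓ : ℝ) = 3 * γ * k := by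
        rw [hn]
        field_simp
      calc (cv v : ℝ) ≤ (((n - 1) / (ℓ + 1) + 1 : ℕ) : ℝ) := by exact_mod_cast h1
        _ ≤ ((n / ℓ : ℕ) : ℝ) + 1 := by
            push_cast
            have := (Nat.cast_le (α := ℝ)).mpr h2; linarith
        _ ≤ (n : ℝ) / (ℓ : ℝ) + 1 := by linarith
        _ = C := by rw [hCdef, h4]
    -- total count of non-cubic positions
    have hsumcv : ∑ v : Fin (3 * ℓ) → α, cv v = NC.card := by
      rw [hcvdef]
      exact (Finset.card_eq_sum_card_fiberwise (fun i _ => Finset.mem_univ (u i))).symm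
    have hNCn : NC.card ≤ n := by
      rw [hNCdef]
      refine le_trans (Finset.card_filter_le _ _) ?_
      rw [Nat.card_Icc]
      omega
    -- the count as a weighted sum over fragments
    set X : ((Fin (3 * ℓ) → α) → Bool) → ℝ := fun h =>
      (((Finset.Icc 1 n).filter fun i =>
          ℓ < rho n ℓ S i ∧ h (fun j => frag n S i (j.1 + 1)) = true).card : ℝ) with hXdef
    have hXsum : ∀ h : (Fin (3 * ℓ) → α) → Bool,
        X h = ∑ v ∈ U, (if h v = true then (cv v : ℝ) else 0) := by
      intro h
      have h1 : ((Finset.Icc 1 n).filter fun i =>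
            ℓ < rho n ℓ S i ∧ h (fun j => frag n S i (j.1 + 1)) = true)
          = NC.filter (fun i => h (u i) = true) := by
        ext i
        simp only [hNCdef, hudef, Finset.mem_filter, Finset.mem_Icc]
        tauto
      have h2 : (NC.filter fun i => h (u i) = true).card
          = ∑ v ∈ U, (if h v = true then cv v else 0) := by
        rw [Finset.card_eq_sum_card_fiberwise (f := u) (t := U)
          (fun i hi => by
            rw [hUdef]
            exact Finset.mem_image_of_mem u (Finset.mem_filter.mp hi).1)]
        refine Finset.sum_congr rfl fun v _ => ?_
        by_cases hbv : h v = true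
        · rw [if_pos hbv]
          have hseteq : (NC.filter fun i => h (u i) = true).filter (fun i => u i = v)
              = NC.filter (fun i => u i = v) := by
            ext i
            simp only [Finset.mem_filter]
            constructor
            · rintro ⟨⟨hi1, _⟩, hi3⟩; exact ⟨hi1, hi3⟩
            · rintro ⟨hi1, hi3⟩; exact ⟨⟨hi1, by rw [hi3]; exact hbv⟩, hi3⟩
          rw [hseteq, hcvdef]
        · rw [if_neg hbv, Finset.card_eq_zero]
          rw [Finset.eq_empty_iff_forall_notMem]
          intro i hi
          simp only [Finset.mem_filter] at hi
          exact hbv (by rw [← hi.2]; exact hi.1.2)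
      simp only [hXdef, h1, h2]
      push_cast [apply_ite (Nat.cast : ℕ → ℝ)]
      rfl
    -- the exponential weight as a product of coordinate functions
    set g : (Fin (3 * ℓ) → α) → Bool → ℝ≥0∞ := fun v b =>
      if v ∈ U then (if b = true then ENNReal.ofReal (Real.exp (t * cv v)) else 1) else 1
      with hgdef
    have hFprod : ∀ h : (Fin (3 * ℓ) → α) → Bool,
        ENNReal.ofReal (Real.exp (t * X h)) = ∏ v, g v (h v) := by
      intro h
      rw [hXsum h, Finset.mul_sum, Real.exp_sum,
        ENNReal.ofReal_prod_of_nonneg (fun v _ => (Real.exp_pos _).le)]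
      rw [show (∏ v, g v (h v)) = ∏ v ∈ U, g v (h v) from
        (Finset.prod_subset (Finset.subset_univ U) (fun v _ hv => by
          simp only [hgdef]; simp [hv])).symm]
      refine Finset.prod_congr rfl fun v hv => ?_
      by_cases hbv : h v = true
      · simp only [hgdef]; simp [hv, hbv]
      · simp only [hgdef]; simp [hv, hbv]
    -- Markov's inequality
    set μ := Measure.pi (fun _ : Fin (3 * ℓ) → α =>
      (PMF.bernoulli (Real.toNNReal p) hple).toMeasure) with hμdef
    have hmark : ENNReal.ofReal (Real.exp (t * (8 * k * Real.log n))) *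
        μ {h | 8 * (k : ℝ) * Real.log n ≤ X h}
        ≤ ∫⁻ h, ENNReal.ofReal (Real.exp (t * X h)) ∂μ := by
      refine le_trans (mul_le_mul_right (measure_mono ?_) _)
        (MeasureTheory.mul_meas_ge_le_lintegral (measurable_of_countable _) _)
      intro h hh
      rw [Set.mem_setOf_eq] at hh ⊢
      exact ENNReal.ofReal_le_ofReal (Real.exp_le_exp.mpr
        (mul_le_mul_of_nonneg_left hh ht0.le))
    -- compute the integral
    have hint : ∫⁻ h, ENNReal.ofReal (Real.exp (t * X h)) ∂μ
        = ∏ v, (g v true * ENNReal.ofReal p + g v false * (1 - ENNReal.ofReal p)) := by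
      simp_rw [hFprod]
      rw [hμdef]
      exact aux_pi_bernoulli _ hple g
    -- bound each factor
    have hfac : ∀ v : Fin (3 * ℓ) → α,
        g v true * ENNReal.ofReal p + g v false * (1 - ENNReal.ofReal p)
          ≤ ENNReal.ofReal (Real.exp (p * (cv v : ℝ) / C)) := by
      intro v
      have hcv0 : (0 : ℝ) ≤ (cv v : ℝ) := Nat.cast_nonneg _
      by_cases hv : v ∈ U
      · have hy0 : 0 ≤ t * (cv v : ℝ) := mul_nonneg ht0.le (Nat.cast_nonneg _)
        have hyL : t * (cv v : ℝ) ≤ L := by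
          rw [htdef]
          calc L / C * (cv v : ℝ) ≤ L / C * C := by
                exact mul_le_mul_of_nonneg_left (hcvC v)
                  (div_nonneg (by linarith) hC0.le)
            _ = L := div_mul_cancel₀ _ hC0.ne'
        have h1p : (1 : ℝ≥0∞) - ENNReal.ofReal p = ENNReal.ofReal (1 - p) := by
          rw [ENNReal.ofReal_sub 1 hp0.le, ENNReal.ofReal_one]
        have hgt : g v true = ENNReal.ofReal (Real.exp (t * (cv v : ℝ))) := by
          simp only [hgdef]; simp [hv]
        have hgf : g v false = 1 := by
          simp only [hgdef]; simp [hv]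
        rw [hgt, hgf, one_mul, h1p, ← ENNReal.ofReal_mul (Real.exp_pos _).le,
          ← ENNReal.ofReal_add (mul_nonneg (Real.exp_pos _).le hp0.le) (by linarith)]
        apply ENNReal.ofReal_le_ofReal
        have he : Real.exp (t * (cv v : ℝ)) ≤ 1 + (t * (cv v : ℝ)) / L := by
          rw [hLdef]
          exact aux_exp_le _ hy0 (by rw [← hLdef]; exact hyL)
        have ht' : (t * (cv v : ℝ)) / L = (cv v : ℝ) / C := by
          rw [htdef]
          field_simp
        rw [ht'] at he
        have hstep : Real.exp (t * (cv v : ℝ)) * p + (1 - p)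
            ≤ (1 + (cv v : ℝ) / C) * p + (1 - p) := by
          have := mul_le_mul_of_nonneg_right he hp0.le
          linarith
        have hone : (1 + (cv v : ℝ) / C) * p + (1 - p) = 1 + p * (cv v : ℝ) / C := by
          ring
        have hexp := Real.add_one_le_exp (p * (cv v : ℝ) / C)
        calc Real.exp (t * (cv v : ℝ)) * p + (1 - p)
            ≤ 1 + p * (cv v : ℝ) / C := by rw [← hone]; exact hstep
          _ ≤ Real.exp (p * (cv v : ℝ) / C) := by linarith
      · have hgt : g v true = 1 := by simp only [hgdef]; simp [hv]
        have hgf : g v false = 1 := by simp only [hgdef]; simp [hv]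
        rw [hgt, hgf, one_mul, one_mul, add_tsub_cancel_of_le (ENNReal.ofReal_le_one.mpr hp1)]
        rw [← ENNReal.ofReal_one]
        exact ENNReal.ofReal_le_ofReal (Real.one_le_exp (div_nonneg (mul_nonneg hp0.le (Nat.cast_nonneg _)) hC0.le))
    -- bound the product
    have hprod : ∏ v : Fin (3 * ℓ) → α,
        (g v true * ENNReal.ofReal p + g v false * (1 - ENNReal.ofReal p))
        ≤ ENNReal.ofReal (Real.exp (4 * k * Real.log n / C)) := by
      calc ∏ v : Fin (3 * ℓ) → α,
            (g v true * ENNReal.ofReal p + g v false * (1 - ENNReal.ofReal p))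
          ≤ ∏ v : Fin (3 * ℓ) → α, ENNReal.ofReal (Real.exp (p * (cv v : ℝ) / C)) :=
            Finset.prod_le_prod' (fun v _ => hfac v)
        _ = ENNReal.ofReal (∏ v : Fin (3 * ℓ) → α, Real.exp (p * (cv v : ℝ) / C)) :=
            (ENNReal.ofReal_prod_of_nonneg (fun v _ => (Real.exp_pos _).le)).symm
        _ = ENNReal.ofReal (Real.exp (∑ v : Fin (3 * ℓ) → α, p * (cv v : ℝ) / C)) := by
            rw [Real.exp_sum]
        _ ≤ ENNReal.ofReal (Real.exp (4 * k * Real.log n / C)) := by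
            apply ENNReal.ofReal_le_ofReal
            apply Real.exp_le_exp.mpr
            have hsum' : ∑ v : Fin (3 * ℓ) → α, p * (cv v : ℝ) / C
                = p * (NC.card : ℝ) / C := by
              rw [← Finset.sum_div, ← Finset.mul_sum]
              congr 2
              rw [← Nat.cast_sum, hsumcv]
            rw [hsum']
            have hpn : p * (n : ℝ) = 4 * k * Real.log n := by
              rw [hpdef]
              field_simp
            have hNCn' : (NC.card : ℝ) ≤ (n : ℝ) := by exact_mod_cast hNCn
            rw [← hpn]
            have hmm : p * (NC.card : ℝ) ≤ p * (n : ℝ) :=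
              mul_le_mul_of_nonneg_left hNCn' hp0.le
            exact div_le_div_of_nonneg_right'' hmm hC0
    -- combine everything
    have hfinal : μ {h | 8 * (k : ℝ) * Real.log n ≤ X h}
        ≤ ENNReal.ofReal (Real.exp (4 * k * Real.log n / C)) /
            ENNReal.ofReal (Real.exp (t * (8 * k * Real.log n))) := by
      have hne : ENNReal.ofReal (Real.exp (t * (8 * k * Real.log n))) ≠ 0 := by
        simp only [ne_eq, ENNReal.ofReal_eq_zero, not_le]
        exact Real.exp_pos _
      rw [ENNReal.le_div_iff_mul_le (Or.inl hne) (Or.inl ENNReal.ofReal_ne_top)]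
      rw [mul_comm]
      exact hmark.trans (by rw [hint]; exact hprod)
    refine le_trans hfinal ?_
    rw [← ENNReal.ofReal_div_of_pos (Real.exp_pos _), ← Real.exp_sub]
    apply ENNReal.ofReal_le_ofReal
    rw [Real.rpow_def_of_pos hn0']
    apply Real.exp_le_exp.mpr
    have hcoef : 4 * (k : ℝ) / C - L / C * (8 * k) ≤ -(4 / (9 * γ)) := by
      have h9 : (0 : ℝ) < 9 * γ := by linarith
      have hdiv : 4 * (k : ℝ) / C - L / C * (8 * k) = (4 * k - 8 * k * L) / C := by
        ring
      rw [hdiv, div_le_iff₀ hC0]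
      have hrw : -(4 / (9 * γ)) * C = -(4 * C) / (9 * γ) := by ring
      rw [hrw, le_div_iff₀ h9]
      nlinarith [mul_lt_mul_of_pos_left hL (show (0 : ℝ) < 72 * (γ * k) by nlinarith),
        hγk, hk0, hγ0]
    calc 4 * (k : ℝ) * Real.log n / C - t * (8 * k * Real.log n)
        = (4 * (k : ℝ) / C - L / C * (8 * k)) * Real.log n := by rw [htdef]; ring
      _ ≤ -(4 / (9 * γ)) * Real.log n := mul_le_mul_of_nonneg_right hcoef hlogn.le
      _ = Real.log n * (-(4 / (9 * γ))) := by ring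
  exact H _ rfl _
end
end

section
/- Let γ ≥ 14 and 1 ≤ k ≤ n as fixed, and let H'_{n,k} denote the set of (3γk, (γ+1)k)-pseudo-periodic strings in Σ^n. Let S1, S2 ∈ H'_{n,k} with (3γk, (γ+1)k)-bases S'_1 and S'_2, respectively. If for some integer m one has Ham(S1, cyc^m(S2)) ≤ k, then S'_1 = cyc^m(S'_2). -/
open Finset
open scoped Classical

noncomputable section

variable {α : Type*}

lemma periodic_eq_mod {n p : ℕ} {S : ℕ → α} (hp : IsPeriod n S p) :
    ∀ i, 1 ≤ i → i ≤ n → S i = S ((i - 1) % p + 1) := by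
  obtain ⟨hp1, hper⟩ := hp
  intro i
  induction i using Nat.strong_induction_on with
  | _ i ih =>
    intro hi1 hin
    rcases le_or_gt i p with h | h
    · rw [Nat.mod_eq_of_lt (by omega)]
      congr 1
      omega
    · have h1 : S (i - p) = S (i - p + p) := hper (i - p) (by omega) (by omega)
      have h2 : i - p + p = i := by omega
      rw [h2] at h1
      have h3 : (i - p - 1) % p = (i - 1) % p := by
        have e : i - 1 = (i - p - 1) + p := by omega
        rw [e, Nat.add_mod_right]
      rw [← h1, ih (i - p) (by omega) (by omega) (by omega), h3]

lemma zwrap_mem {n : ℕ} (hn : 0 < n) (z : ℤ) : 1 ≤ zwrap n z ∧ zwrap n z ≤ n := by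
  unfold zwrap
  have h1 : 0 ≤ (z - 1) % (n:ℤ) := Int.emod_nonneg _ (by exact_mod_cast hn.ne')
  have h2 : (z - 1) % (n:ℤ) < n := Int.emod_lt_of_pos _ (by exact_mod_cast hn)
  omega

lemma zwrap_cast {n : ℕ} (hn : 0 < n) (z : ℤ) : ((zwrap n z : ℕ) : ℤ) = (z - 1) % n + 1 := by
  unfold zwrap
  have h1 : 0 ≤ (z - 1) % (n:ℤ) := Int.emod_nonneg _ (by exact_mod_cast hn.ne')
  omega

lemma period_zwrap_eq {n q : ℕ} {S : ℕ → α} (hn : 0 < n) (hq : IsPeriod n S q) (hqn : q ∣ n)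
    {z1 z2 : ℤ} (hz : z1 % (q:ℤ) = z2 % (q:ℤ)) : S (zwrap n z1) = S (zwrap n z2) := by
  have hqz : (q:ℤ) ∣ (n:ℤ) := Int.natCast_dvd_natCast.mpr hqn
  have e1 := periodic_eq_mod hq (zwrap n z1) (zwrap_mem hn z1).1 (zwrap_mem hn z1).2
  have e2 := periodic_eq_mod hq (zwrap n z2) (zwrap_mem hn z2).1 (zwrap_mem hn z2).2
  have key : (zwrap n z1 - 1) % q = (zwrap n z2 - 1) % q := by
    have c1 : ((zwrap n z1 - 1 : ℕ) : ℤ) = (z1 - 1) % n := by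
      have h1 := zwrap_cast hn z1
      have h2 := (zwrap_mem hn z1).1
      omega
    have c2 : ((zwrap n z2 - 1 : ℕ) : ℤ) = (z2 - 1) % n := by
      have h1 := zwrap_cast hn z2
      have h2 := (zwrap_mem hn z2).1
      omega
    have hsub : (z1 - 1) % (q:ℤ) = (z2 - 1) % (q:ℤ) := Int.ModEq.sub_right 1 hz
    have : ((zwrap n z1 - 1 : ℕ) : ℤ) % q = ((zwrap n z2 - 1 : ℕ) : ℤ) % q := by
      rw [c1, c2, Int.emod_emod_of_dvd _ hqz, Int.emod_emod_of_dvd _ hqz, hsub]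
    exact_mod_cast this
  rw [e1, e2, key]

lemma ham_comm (n : ℕ) (S T : ℕ → α) : ham n S T = ham n T S := by
  unfold ham hamIcc
  congr 1
  apply Finset.filter_congr
  intro i _
  simp [ne_comm]

lemma ham_triangle (n : ℕ) (S T U : ℕ → α) : ham n S U ≤ ham n S T + ham n T U := by
  unfold ham hamIcc
  calc ((Finset.Icc 1 n).filter fun j => S j ≠ U j).card
      ≤ (((Finset.Icc 1 n).filter fun j => S j ≠ T j) ∪
          ((Finset.Icc 1 n).filter fun j => T j ≠ U j)).card := by
        apply Finset.card_le_card
        intro i hi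
        simp only [Finset.mem_filter, Finset.mem_union] at *
        by_cases h : S i = T i
        · exact Or.inr ⟨hi.1, by rw [← h]; exact hi.2⟩
        · exact Or.inl ⟨hi.1, h⟩
    _ ≤ _ := Finset.card_union_le _ _

lemma zwrap_injOn {n : ℕ} (hn : 0 < n) (m : ℤ) :
    Set.InjOn (fun i : ℕ => zwrap n ((i:ℤ) + m)) (Finset.Icc 1 n : Finset ℕ) := by
  intro i hi j hj hij
  simp only [Finset.coe_Icc, Set.mem_Icc] at hi hj
  have c1 := zwrap_cast hn ((i:ℤ) + m)
  have c2 := zwrap_cast hn ((j:ℤ) + m)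
  have hcast : ((zwrap n ((i:ℤ)+m) : ℕ) : ℤ) = ((zwrap n ((j:ℤ)+m) : ℕ) : ℤ) := by
    exact_mod_cast congrArg (fun x : ℕ => (x : ℤ)) hij
  rw [c1, c2] at hcast
  have hmod : ((i:ℤ) + m - 1) % n = ((j:ℤ) + m - 1) % n := by omega
  have hdvd : (n:ℤ) ∣ ((j:ℤ) + m - 1) - ((i:ℤ) + m - 1) := Int.ModEq.dvd hmod
  have hdvd' : (n:ℤ) ∣ (j:ℤ) - (i:ℤ) := by
    have e : ((j:ℤ) + m - 1) - ((i:ℤ) + m - 1) = (j:ℤ) - i := by ring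
    rwa [e] at hdvd
  have hz : (j:ℤ) - (i:ℤ) = 0 := by
    refine Int.eq_zero_of_abs_lt_dvd hdvd' ?_
    rw [abs_lt]
    constructor <;> omega
  have : (i:ℤ) = (j:ℤ) := by omega
  exact_mod_cast this

lemma ham_cycZ (n : ℕ) (hn : 0 < n) (m : ℤ) (S T : ℕ → α) :
    ham n (cycZ n m S) (cycZ n m T) ≤ ham n S T := by
  unfold ham hamIcc
  refine Finset.card_le_card_of_injOn (fun i => zwrap n ((i:ℤ) + m)) ?_ ?_
  · intro i hi
    simp only [Finset.mem_coe, Finset.mem_filter, Finset.mem_Icc] at *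
    exact ⟨⟨(zwrap_mem hn _).1, (zwrap_mem hn _).2⟩, hi.2⟩
  · exact (zwrap_injOn hn m).mono (by exact_mod_cast Finset.filter_subset _ _)

lemma key_lemma {α : Type*} {n p q K : ℕ} (hn : 0 < n) (hp : 0 < p) (hq : 0 < q)
    (hpn : p ∣ n) (hqn : q ∣ n) (hKp : K * p < n) (hKq : K * q < n)
    (u v : ℕ → α)
    (hD : ((Finset.Icc 1 n).filter fun i => u ((i-1) % p) ≠ v ((i-1) % q)).card ≤ K) :
    ∀ x : ℕ, u (x % p) = v (x % q) := by
  classical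
  set g := Nat.gcd p q with hgdef
  set L := Nat.lcm p q with hLdef
  have hg0 : 0 < g := Nat.gcd_pos_of_pos_left q hp
  have hL0 : 0 < L := Nat.lcm_pos hp hq
  have hpL : p ∣ L := Nat.dvd_lcm_left p q
  have hqL : q ∣ L := Nat.dvd_lcm_right p q
  have hgp : g ∣ p := Nat.gcd_dvd_left p q
  have hgq : g ∣ q := Nat.gcd_dvd_right p q
  have hLn : L ∣ n := Nat.lcm_dvd hpn hqn
  have hgL : g * L = p * q := Nat.gcd_mul_lcm p q
  set N := n / L with hNdef
  have hLN : L * N = n := Nat.mul_div_cancel' hLn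
  have hN0 : 0 < N := by
    rcases Nat.eq_zero_or_pos N with h | h
    · rw [h, Nat.mul_zero] at hLN; omega
    · exact h
  set BP := ((Finset.range p) ×ˢ (Finset.range q)).filter
      (fun ab => ab.1 % g = ab.2 % g ∧ u ab.1 ≠ v ab.2) with hBPdef
  set Dab := fun ab : ℕ × ℕ => (Finset.Icc 1 n).filter
      (fun i => (i-1) % p = ab.1 ∧ (i-1) % q = ab.2) with hDabdef
  -- each Dab for ab ∈ BP has card ≥ N
  have hcard : ∀ ab ∈ BP, N ≤ (Dab ab).card := by
    rintro ⟨a, b⟩ hab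
    simp only [hBPdef, Finset.mem_filter, Finset.mem_product, Finset.mem_range] at hab
    obtain ⟨⟨hap, hbq⟩, habg, _⟩ := hab
    obtain ⟨c0, hc0a, hc0b⟩ := Nat.chineseRemainder' (show Nat.ModEq g a b from habg)
    set c := c0 % L with hcdef
    have hcL : c < L := Nat.mod_lt _ hL0
    have hcp : c % p = a := by
      have h1 : c % p = c0 % p := Nat.mod_mod_of_dvd c0 hpL
      rw [h1, hc0a, Nat.mod_eq_of_lt hap]
    have hcq : c % q = b := by
      have h1 : c % q = c0 % q := Nat.mod_mod_of_dvd c0 hqL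
      rw [h1, hc0b, Nat.mod_eq_of_lt hbq]
    have hsub : (Finset.range N).image (fun t => c + 1 + t * L) ⊆ Dab (a, b) := by
      intro i hi
      simp only [Finset.mem_image, Finset.mem_range] at hi
      obtain ⟨t, htN, rfl⟩ := hi
      simp only [hDabdef, Finset.mem_filter, Finset.mem_Icc]
      have hle : c + 1 + t * L ≤ n := by
        have h1 : (t + 1) * L ≤ N * L := Nat.mul_le_mul_right L (by omega)
        have h2 : (t + 1) * L = t * L + L := by ring
        have h3 : N * L = n := by rw [Nat.mul_comm]; exact hLN
        omega
      refine ⟨⟨by omega, hle⟩, ?_, ?_⟩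
      · obtain ⟨s, hs⟩ := hpL
        have e1 : c + 1 + t * L - 1 = c + (t * s) * p := by
          have : t * L = (t * s) * p := by rw [hs]; ring
          omega
        rw [e1, Nat.add_mul_mod_self_right, hcp]
      · obtain ⟨s, hs⟩ := hqL
        have e1 : c + 1 + t * L - 1 = c + (t * s) * q := by
          have : t * L = (t * s) * q := by rw [hs]; ring
          omega
        rw [e1, Nat.add_mul_mod_self_right, hcq]
    calc N = ((Finset.range N).image (fun t => c + 1 + t * L)).card := by
          rw [Finset.card_image_of_injective _ ?_, Finset.card_range]
          intro t1 t2 h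
          simp only at h
          have h' : t1 * L = t2 * L := by omega
          exact Nat.eq_of_mul_eq_mul_right hL0 h'
      _ ≤ (Dab (a, b)).card := Finset.card_le_card hsub
  have hdisj : ∀ ab ∈ BP, ∀ ab' ∈ BP, ab ≠ ab' → Disjoint (Dab ab) (Dab ab') := by
    rintro ⟨a, b⟩ _ ⟨a', b'⟩ _ hne
    rw [Finset.disjoint_left]
    intro i hi hi'
    simp only [hDabdef, Finset.mem_filter] at hi hi'
    exact hne (by rw [Prod.mk.injEq]; omega)
  have hsubD : BP.biUnion Dab ⊆ (Finset.Icc 1 n).filter fun i => u ((i-1) % p) ≠ v ((i-1) % q) := by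
    intro i hi
    simp only [Finset.mem_biUnion] at hi
    obtain ⟨⟨a, b⟩, hab, hi⟩ := hi
    simp only [hBPdef, Finset.mem_filter, Finset.mem_product, Finset.mem_range] at hab
    simp only [hDabdef, Finset.mem_filter] at hi
    simp only [Finset.mem_filter]
    refine ⟨hi.1, ?_⟩
    rw [hi.2.1, hi.2.2]
    exact hab.2.2
  have hBPN : BP.card * N ≤ K := by
    calc BP.card * N = ∑ _ab ∈ BP, N := by rw [Finset.sum_const, smul_eq_mul]
      _ ≤ ∑ ab ∈ BP, (Dab ab).card := Finset.sum_le_sum hcard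
      _ = (BP.biUnion Dab).card := (Finset.card_biUnion hdisj).symm
      _ ≤ K := le_trans (Finset.card_le_card hsubD) hD
  -- BP.card < p / g and < q / g
  obtain ⟨P, hP⟩ := hgp
  obtain ⟨Q, hQ⟩ := hgq
  have hPg : p / g = P := by rw [hP, Nat.mul_div_cancel_left _ hg0]
  have hQg : q / g = Q := by rw [hQ, Nat.mul_div_cancel_left _ hg0]
  have hLP : P * q = L := by
    have h1 : g * L = g * (P * q) := by rw [hgL, hP]; ring
    exact (Nat.eq_of_mul_eq_mul_left hg0 h1).symm
  have hLQ : Q * p = L := by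
    have h1 : g * L = g * (Q * p) := by rw [hgL, hQ]; ring
    exact (Nat.eq_of_mul_eq_mul_left hg0 h1).symm
  have hBPp : BP.card < P := by
    by_contra h
    push_neg at h
    have h1 : P * N ≤ K := le_trans (Nat.mul_le_mul_right N h) hBPN
    have h2 : P * N * q ≤ K * q := Nat.mul_le_mul_right q h1
    have h3 : P * N * q = n := by rw [mul_right_comm, hLP, hLN]
    omega
  have hBPq : BP.card < Q := by
    by_contra h
    push_neg at h
    have h1 : Q * N ≤ K := le_trans (Nat.mul_le_mul_right N h) hBPN
    have h2 : Q * N * p ≤ K * p := Nat.mul_le_mul_right p h1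
    have h3 : Q * N * p = n := by rw [mul_right_comm, hLQ, hLN]
    omega
  -- now the main argument
  intro x
  set a0 := x % p with ha0def
  set b0 := x % q with hb0def
  set r := x % g with hrdef
  have hr : r < g := Nat.mod_lt x hg0
  have ha0 : a0 < p := Nat.mod_lt x hp
  have hb0 : b0 < q := Nat.mod_lt x hq
  have ha0g : a0 % g = r := Nat.mod_mod_of_dvd x ⟨P, hP⟩
  have hb0g : b0 % g = r := Nat.mod_mod_of_dvd x ⟨Q, hQ⟩
  have hclassmem : ∀ (s J : ℕ), g * J = s → ∀ a ∈ (Finset.range J).image (fun j => r + j * g),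
      a < s ∧ a % g = r := by
    intro s J hs a ha
    simp only [Finset.mem_image, Finset.mem_range] at ha
    obtain ⟨j, hj, rfl⟩ := ha
    constructor
    · have h1 : (j + 1) * g ≤ J * g := Nat.mul_le_mul_right g (by omega)
      have h2 : (j + 1) * g = j * g + g := by ring
      have h3 : J * g = s := by rw [Nat.mul_comm]; exact hs
      omega
    · rw [Nat.add_mul_mod_self_right, Nat.mod_eq_of_lt hr]
  have hclasscard : ∀ J : ℕ, ((Finset.range J).image (fun j => r + j * g)).card = J := by
    intro J
    rw [Finset.card_image_of_injective _ ?_, Finset.card_range]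
    intro t1 t2 h
    simp only at h
    have h' : t1 * g = t2 * g := by omega
    exact Nat.eq_of_mul_eq_mul_right hg0 h'
  -- find a' with (a', b0) ∉ BP
  set classP := (Finset.range P).image (fun j => r + j * g) with hclassPdef
  have hBad1 : (classP.filter (fun a => (a, b0) ∈ BP)).card ≤ BP.card := by
    refine Finset.card_le_card_of_injOn (fun a => (a, b0)) ?_ ?_
    · intro a ha
      exact (Finset.mem_filter.mp ha).2
    · intro a1 _ a2 _ h
      exact (Prod.mk.injEq _ _ _ _ ▸ h : a1 = a2 ∧ b0 = b0).1
  have hnotsub : ¬ classP ⊆ (classP.filter (fun a => (a, b0) ∈ BP)) := by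
    intro hsub
    have := Finset.card_le_card hsub
    rw [hclasscard P] at this
    omega
  obtain ⟨a', ha'P, ha'nB⟩ := Finset.not_subset.mp hnotsub
  have ha'p : a' < p := ((hclassmem p P (hP.symm)) a' ha'P).1
  have ha'g : a' % g = r := ((hclassmem p P (hP.symm)) a' ha'P).2
  have ha'BP : (a', b0) ∉ BP := fun h => ha'nB (Finset.mem_filter.mpr ⟨ha'P, h⟩)
  have hu1 : u a' = v b0 := by
    by_contra hne
    exact ha'BP (by
      simp only [hBPdef, Finset.mem_filter, Finset.mem_product, Finset.mem_range]
      exact ⟨⟨ha'p, hb0⟩, by rw [ha'g, hb0g], hne⟩)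
  -- find c' with (a0, c') ∉ BP and (a', c') ∉ BP
  set classQ := (Finset.range Q).image (fun j => r + j * g) with hclassQdef
  have hBad2 : (classQ.filter (fun c => (a0, c) ∈ BP ∨ (a', c) ∈ BP)).card ≤ BP.card := by
    refine Finset.card_le_card_of_injOn
      (fun c => if (a0, c) ∈ BP then (a0, c) else (a', c)) ?_ ?_
    · intro c hc
      rcases (Finset.mem_filter.mp hc).2 with h | h
      · simp [h]
      · by_cases h0 : (a0, c) ∈ BP
        · simp [h0]
        · simp [h0, h]
    · intro c1 _ c2 _ h
      have h2 := congrArg Prod.snd h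
      simp only at h2
      split_ifs at h2 <;> simpa using h2
  have hnotsub2 : ¬ classQ ⊆ (classQ.filter (fun c => (a0, c) ∈ BP ∨ (a', c) ∈ BP)) := by
    intro hsub
    have := Finset.card_le_card hsub
    rw [hclasscard Q] at this
    omega
  obtain ⟨c', hc'Q, hc'nB⟩ := Finset.not_subset.mp hnotsub2
  have hc'q : c' < q := ((hclassmem q Q (hQ.symm)) c' hc'Q).1
  have hc'g : c' % g = r := ((hclassmem q Q (hQ.symm)) c' hc'Q).2
  have hc'BP : (a0, c') ∉ BP ∧ (a', c') ∉ BP := by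
    constructor <;> intro h <;> exact hc'nB (Finset.mem_filter.mpr ⟨hc'Q, by tauto⟩)
  have hu2 : u a0 = v c' := by
    by_contra hne
    exact hc'BP.1 (by
      simp only [hBPdef, Finset.mem_filter, Finset.mem_product, Finset.mem_range]
      exact ⟨⟨ha0, hc'q⟩, by rw [ha0g, hc'g], hne⟩)
  have hu3 : u a' = v c' := by
    by_contra hne
    exact hc'BP.2 (by
      simp only [hBPdef, Finset.mem_filter, Finset.mem_product, Finset.mem_range]
      exact ⟨⟨ha'p, hc'q⟩, by rw [ha'g, hc'g], hne⟩)
  rw [hu2, ← hu3]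
  exact hu1

/-- Let `S1, S2 ∈ H'_{n,k}` with `(3γk,(γ+1)k)`-bases `S'_1, S'_2`. If
`Ham(S1, cyc^m(S2)) ≤ k` for some integer `m`, then `S'_1 = cyc^m(S'_2)`. -/
theorem stmt18 {α : Type*} (n k ℓ : ℕ) (γ : ℝ)
    (hk1 : 1 ≤ k) (hkn : k ≤ n) (hγ : 14 ≤ γ) (hℓ1 : 1 ≤ ℓ)
    (hn : (n : ℝ) = 3 * γ * k * ℓ)
    (S1 S2 S1' S2' : ℕ → α)
    (h1r : (root n S1' : ℝ) ≤ (n : ℝ) / (3 * γ * k))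
    (h1h : (ham n S1 S1' : ℝ) ≤ (γ + 1) * k)
    (h2r : (root n S2' : ℝ) ≤ (n : ℝ) / (3 * γ * k))
    (h2h : (ham n S2 S2' : ℝ) ≤ (γ + 1) * k)
    (m : ℤ) (hham : ham n S1 (cycZ n m S2) ≤ k) :
    ∀ i ∈ Finset.Icc 1 n, S1' i = cycZ n m S2' i := by
  have hn0 : 0 < n := lt_of_lt_of_le hk1 hkn
  -- the roots are periods dividing n
  have hroot : ∀ S : ℕ → α, root n S ∣ n ∧ IsPeriod n S (root n S) := by
    intro S
    have hne : {r | r ∣ n ∧ IsPeriod n S r}.Nonempty :=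
      ⟨n, dvd_rfl, hn0, fun j hj hjn => absurd hjn (by omega)⟩
    exact Nat.sInf_mem hne
  set p := root n S1' with hpdef
  set q := root n S2' with hqdef
  obtain ⟨hpn, hp_per⟩ := hroot S1'
  obtain ⟨hqn, hq_per⟩ := hroot S2'
  have hp0 : 0 < p := hp_per.1
  have hq0 : 0 < q := hq_per.1
  -- real arithmetic
  have hγ0 : (0:ℝ) < γ := by linarith
  have hk0 : (0:ℝ) < (k:ℝ) := by exact_mod_cast hk1
  have hl0 : (0:ℝ) < (ℓ:ℝ) := by exact_mod_cast hℓ1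
  have h3γk : (0:ℝ) < 3 * γ * k := by positivity
  have hdiv : (n:ℝ) / (3 * γ * k) = (ℓ:ℝ) := by
    rw [hn]; field_simp
  have hpl : (p:ℝ) ≤ (ℓ:ℝ) := by rw [← hdiv]; exact h1r
  have hql : (q:ℝ) ≤ (ℓ:ℝ) := by rw [← hdiv]; exact h2r
  set K := ham n S1' (cycZ n m S2') with hKdef
  have hKnat : K ≤ ham n S1 S1' + ham n S1 (cycZ n m S2) + ham n S2 S2' := by
    calc K ≤ ham n S1' S1 + ham n S1 (cycZ n m S2') := ham_triangle n _ _ _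
      _ ≤ ham n S1' S1 + (ham n S1 (cycZ n m S2) + ham n (cycZ n m S2) (cycZ n m S2')) :=
          Nat.add_le_add_left (ham_triangle n _ _ _) _
      _ ≤ ham n S1 S1' + (ham n S1 (cycZ n m S2) + ham n S2 S2') := by
          rw [ham_comm n S1' S1]
          exact Nat.add_le_add_left (Nat.add_le_add_left (ham_cycZ n hn0 m S2 S2') _) _
      _ = _ := by omega
  have hKreal : (K:ℝ) ≤ (2 * γ + 3) * k := by
    have h1 : (K:ℝ) ≤ (ham n S1 S1' : ℝ) + (ham n S1 (cycZ n m S2) : ℝ) + (ham n S2 S2' : ℝ) := by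
      exact_mod_cast hKnat
    have h2 : (ham n S1 (cycZ n m S2) : ℝ) ≤ (k:ℝ) := by exact_mod_cast hham
    linarith
  have hKp : K * p < n := by
    have h1 : (K:ℝ) * p ≤ ((2 * γ + 3) * k) * ℓ := by
      apply mul_le_mul hKreal hpl (by positivity) (by positivity)
    have h2 : ((2 * γ + 3) * k) * ℓ < (n:ℝ) := by
      rw [hn]; nlinarith
    have : ((K * p : ℕ) : ℝ) < (n:ℝ) := by push_cast; linarith
    exact_mod_cast this
  have hKq : K * q < n := by
    have h1 : (K:ℝ) * q ≤ ((2 * γ + 3) * k) * ℓ := by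
      apply mul_le_mul hKreal hql (by positivity) (by positivity)
    have h2 : ((2 * γ + 3) * k) * ℓ < (n:ℝ) := by
      rw [hn]; nlinarith
    have : ((K * q : ℕ) : ℝ) < (n:ℝ) := by push_cast; linarith
    exact_mod_cast this
  -- set up u, v
  set u : ℕ → α := fun a => S1' (a + 1) with hudef
  set v : ℕ → α := fun b => S2' (zwrap n ((b:ℤ) + 1 + m)) with hvdef
  have hui : ∀ i ∈ Finset.Icc 1 n, S1' i = u ((i - 1) % p) := by
    intro i hi
    simp only [Finset.mem_Icc] at hi
    exact periodic_eq_mod hp_per i hi.1 hi.2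
  have hvi : ∀ i ∈ Finset.Icc 1 n, cycZ n m S2' i = v ((i - 1) % q) := by
    intro i hi
    simp only [Finset.mem_Icc] at hi
    show S2' (zwrap n ((i:ℤ) + m)) = S2' (zwrap n ((((i - 1) % q : ℕ) : ℤ) + 1 + m))
    apply period_zwrap_eq hn0 hq_per hqn
    have hc : (((i - 1) % q : ℕ) : ℤ) = ((i:ℤ) - 1) % (q:ℤ) := by
      push_cast
      congr 1
      omega
    rw [hc]
    have h1 : ((i:ℤ) - 1) % (q:ℤ) % (q:ℤ) = ((i:ℤ) - 1) % (q:ℤ) :=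
      Int.emod_emod_of_dvd _ dvd_rfl
    have h2 := Int.ModEq.add_right (1 + m) (h1 : ((i:ℤ) - 1) % (q:ℤ) ≡ ((i:ℤ) - 1) [ZMOD (q:ℤ)])
    calc ((i:ℤ) + m) % (q:ℤ) = (((i:ℤ) - 1) + (1 + m)) % (q:ℤ) := by ring_nf
      _ = (((i:ℤ) - 1) % (q:ℤ) + (1 + m)) % (q:ℤ) := h2.symm
      _ = (((i:ℤ) - 1) % (q:ℤ) + 1 + m) % (q:ℤ) := by ring_nf
  have hfilter : ((Finset.Icc 1 n).filter fun i => u ((i - 1) % p) ≠ v ((i - 1) % q))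
      = ((Finset.Icc 1 n).filter fun i => S1' i ≠ cycZ n m S2' i) := by
    apply Finset.filter_congr
    intro i hi
    rw [hui i hi, hvi i hi]
  have hD : ((Finset.Icc 1 n).filter fun i => u ((i - 1) % p) ≠ v ((i - 1) % q)).card ≤ K := by
    rw [hfilter]
    exact le_of_eq rfl
  have hkey := key_lemma hn0 hp0 hq0 hpn hqn hKp hKq u v hD
  intro i hi
  rw [hui i hi, hvi i hi]
  exact hkey (i - 1)
end
end
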